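/- arXiv:1402.5021 — 6 statements merged into one kernel-verified Lean document; each statement's English description precedes it below -/
import Mathlib

section
/- Let n ≥ 1 and a > 1. Then max over x ∈ [−1, 1] of |√(1 − x²)·n·U_{n−1}(x)/(T_n(x) − T_n(a))| equals n/√(T_n(a)² − 1). -/
noncomputable def chebT (n : ℤ) (x : ℝ) : ℝ := (Polynomial.Chebyshev.T ℝ n).eval x
noncomputable def chebU (n : ℤ) (x : ℝ) : ℝ := (Polynomial.Chebyshev.U ℝ n).eval x

open Real Polynomial.Chebyshev

lemma chebT_rec (a : ℝ) (k : ℤ) : chebT (k + 2) a = 2 * a * chebT (k + 1) a - chebT k a := by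
  simp [chebT, T_add_two]

lemma chebT_gt_one (a : ℝ) (ha : 1 < a) :
    ∀ n : ℕ, 1 ≤ chebT n a ∧ chebT n a < chebT ((n : ℤ) + 1) a := by
  intro n
  induction n with
  | zero => simp [chebT, ha.le, ha]
  | succ m ih =>
    obtain ⟨h1, h2⟩ := ih
    have key := chebT_rec a m
    have key2 := chebT_rec a (m + 1)
    have e1 : ((m + 1 : ℕ) : ℤ) = (m : ℤ) + 1 := by push_cast; ring
    rw [e1]
    constructor
    · rw [show (m : ℤ) + 1 = (m : ℤ) + 1 by ring] at *
      nlinarith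
    · rw [show (m : ℤ) + 1 + 1 = (m : ℤ) + 2 by ring,
        show (m : ℤ) + 1 + 2 = (m : ℤ) + 1 + 1 + 1 by ring] at *
      nlinarith

lemma key_ineq (c t : ℝ) (hc : 1 < c) : Real.sqrt (c ^ 2 - 1) * |Real.sin t| ≤ c - Real.cos t := by
  set s := Real.sqrt (c ^ 2 - 1) with hs
  have hs0 : 0 ≤ s := Real.sqrt_nonneg _
  have hs2 : s ^ 2 = c ^ 2 - 1 := Real.sq_sqrt (by nlinarith)
  have hsin : Real.sin t ^ 2 + Real.cos t ^ 2 = 1 := Real.sin_sq_add_cos_sq t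
  have habs : |Real.sin t| ^ 2 = Real.sin t ^ 2 := sq_abs _
  have h1 : Real.cos t ≤ 1 := Real.cos_le_one t
  have h2 : (0:ℝ) ≤ |Real.sin t| := abs_nonneg _
  nlinarith [sq_nonneg (c * Real.cos t - 1), sq_nonneg (s * |Real.sin t| - (c - Real.cos t)),
    sq_nonneg (s * |Real.sin t| + (c - Real.cos t)), mul_nonneg hs0 h2]

theorem stmt7 (n : ℕ) (hn : 1 ≤ n) (a : ℝ) (ha : 1 < a) :
    IsGreatest ((fun x : ℝ => |Real.sqrt (1 - x ^ 2) * (n * chebU ((n : ℤ) - 1) x)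
        / (chebT n x - chebT n a)|) '' Set.Icc (-1) 1)
      (n / Real.sqrt (chebT n a ^ 2 - 1)) := by
  set c := chebT n a with hcdef
  have hc : 1 < c := by
    rw [hcdef]
    rcases n with _ | m
    · omega
    · obtain ⟨h1, h2⟩ := chebT_gt_one a ha m
      rw [show ((m + 1 : ℕ) : ℤ) = (m : ℤ) + 1 by push_cast; ring]
      linarith
  have hc21 : 0 < c ^ 2 - 1 := by nlinarith
  have hs0 : 0 < Real.sqrt (c ^ 2 - 1) := Real.sqrt_pos.mpr hc21
  have hs2 : Real.sqrt (c ^ 2 - 1) ^ 2 = c ^ 2 - 1 := Real.sq_sqrt hc21.le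
  constructor
  · -- membership: x₀ = cos (arccos (1/c) / n)
    have hcpos : (0:ℝ) < c := by linarith
    have hninv1 : (-1:ℝ) ≤ 1/c := by
      have : (0:ℝ) < 1/c := by positivity
      linarith
    have hninv2 : (1:ℝ)/c ≤ 1 := by rw [div_le_one hcpos]; linarith
    set φ := Real.arccos (1/c) with hφ
    set θ := φ / n with hθ
    have hn0 : (0:ℝ) < n := by exact_mod_cast hn
    have hnθ : (n:ℝ) * θ = φ := by rw [hθ]; field_simp [hn0.ne']
    have hφ0 : 0 ≤ φ := Real.arccos_nonneg _
    have hφπ : φ ≤ Real.pi := Real.arccos_le_pi _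
    have hθ0 : 0 ≤ θ := by positivity
    have hθπ : θ ≤ Real.pi := by
      have hn1 : (1:ℝ) ≤ n := by exact_mod_cast hn
      rw [hθ, div_le_iff₀ hn0]
      nlinarith [Real.pi_pos]
    have hsinθnn : 0 ≤ Real.sin θ := Real.sin_nonneg_of_nonneg_of_le_pi hθ0 hθπ
    refine ⟨Real.cos θ, ⟨Real.neg_one_le_cos θ, Real.cos_le_one θ⟩, ?_⟩
    have hsq : 1 - Real.cos θ ^ 2 = Real.sin θ ^ 2 := by
      nlinarith [Real.sin_sq_add_cos_sq θ]
    have hsinθ : Real.sqrt (1 - Real.cos θ ^ 2) = Real.sin θ := by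
      rw [hsq, Real.sqrt_sq hsinθnn]
    have hT : chebT n (Real.cos θ) = Real.cos ((n:ℝ) * θ) := by simp [chebT]
    have hU : chebU ((n : ℤ) - 1) (Real.cos θ) * Real.sin θ = Real.sin ((n:ℝ) * θ) := by
      have := U_real_cos θ ((n : ℤ) - 1)
      push_cast at this
      rw [show ((n:ℝ) - 1 + 1) = (n:ℝ) by ring] at this
      simpa [chebU] using this
    have hcosφ : Real.cos φ = 1/c := Real.cos_arccos hninv1 hninv2
    have hsinφ' : Real.sin φ = Real.sqrt (c^2 - 1) / c := by
      rw [hφ, Real.sin_arccos,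
        show (1 : ℝ) - (1/c)^2 = (c^2-1)/c^2 by field_simp,
        Real.sqrt_div hc21.le, Real.sqrt_sq hcpos.le]
    have hval : Real.sqrt (1 - Real.cos θ ^ 2) * (↑n * chebU ((n : ℤ) - 1) (Real.cos θ)) /
        (chebT ↑n (Real.cos θ) - c) = (n : ℝ) * Real.sin φ / (Real.cos φ - c) := by
      rw [hsinθ, hT, ← hnθ]
      rw [show Real.sin θ * ((n:ℝ) * chebU ((n : ℤ) - 1) (Real.cos θ)) =
        (n:ℝ) * (chebU ((n : ℤ) - 1) (Real.cos θ) * Real.sin θ) by ring, hU]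
    show |Real.sqrt (1 - Real.cos θ ^ 2) * (↑n * chebU ((n:ℤ) - 1) (Real.cos θ)) /
        (chebT ↑n (Real.cos θ) - c)| = ↑n / Real.sqrt (c ^ 2 - 1)
    rw [hval, hcosφ, hsinφ']
    have hdenneg : (1:ℝ)/c - c < 0 := by
      have : (1:ℝ)/c ≤ 1 := hninv2
      linarith
    rw [abs_div, abs_of_nonneg (by positivity), abs_of_neg hdenneg]
    rw [show -(1/c - c) = (c^2-1)/c by field_simp; ring, ← hs2]
    have hcne : c ≠ 0 := by positivity
    field_simp
    linear_combination Real.sq_sqrt (sq_nonneg (Real.sqrt (c^2-1)))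
  · rintro v ⟨x, hx, rfl⟩
    set θ := Real.arccos x with hθ
    have hcos : Real.cos θ = x := Real.cos_arccos hx.1 hx.2
    have hsin : Real.sqrt (1 - x ^ 2) = Real.sin θ := (Real.sin_arccos x).symm
    have hT : chebT n x = Real.cos ((n:ℝ) * θ) := by rw [← hcos]; simp [chebT]
    have hU : chebU ((n : ℤ) - 1) x * Real.sin θ = Real.sin ((n:ℝ) * θ) := by
      have := U_real_cos θ ((n : ℤ) - 1)
      push_cast at this
      rw [show ((n:ℝ) - 1 + 1) = (n:ℝ) by ring, hcos] at this
      simpa [chebU] using this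
    have hden : Real.cos ((n:ℝ) * θ) - c < 0 := by
      nlinarith [Real.cos_le_one ((n:ℝ)*θ)]
    have hnum : Real.sqrt (1 - x ^ 2) * ((n:ℝ) * chebU ((n : ℤ) - 1) x) = (n:ℝ) * Real.sin ((n:ℝ)*θ) := by
      rw [hsin, ← hU]; ring
    simp only [hnum, hT]
    rw [abs_div, abs_of_neg hden]
    rw [div_le_div_iff₀ (by linarith) hs0]
    have hkey := key_ineq c ((n:ℝ)*θ) hc
    have hn0 : (0:ℝ) ≤ n := Nat.cast_nonneg n
    calc |(n:ℝ) * Real.sin ((n:ℝ)*θ)| * Real.sqrt (c^2-1)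
        = (n:ℝ) * (Real.sqrt (c^2-1) * |Real.sin ((n:ℝ)*θ)|) := by
          rw [abs_mul, abs_of_nonneg hn0]; ring
      _ ≤ (n:ℝ) * (c - Real.cos ((n:ℝ)*θ)) := mul_le_mul_of_nonneg_left hkey hn0
      _ = (n:ℝ) * -(Real.cos ((n:ℝ)*θ) - c) := by ring
end

section
/- Let p(x) = ∏_{k=1}^n (x − z_k) have simple roots z_1, …, z_n and let q(x) = ∏_{k=1}^m (x − ζ_k) with m ≤ n, where no z_k equals any ζ_j. Then there exist constants γ_1, …, γ_n such that p'(x)/p(x) − q'(x)/q(x) = (p(x)/q(x))·∑_{k=1}^n γ_k/(x − z_k)², as an identity of rational functions. -/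
open Polynomial Finset

theorem stmt8 (n m : ℕ) (hm : m ≤ n) (z : Fin n → ℂ) (ζ : Fin m → ℂ)
    (hz : Function.Injective z) (hdisj : ∀ k j, z k ≠ ζ j) :
    ∃ γ : Fin n → ℂ,
      ∀ x : ℂ, (∀ k, x ≠ z k) → (∀ j, x ≠ ζ j) →
        (∏ k, (x - z k)) ≠ 0 →
        (derivative (∏ k, (X - C (z k)))).eval x / (∏ k, (x - z k))
          - (derivative (∏ j, (X - C (ζ j)))).eval x / (∏ j, (x - ζ j))
        = ((∏ k, (x - z k)) / (∏ j, (x - ζ j))) * ∑ k, γ k / (x - z k) ^ 2 := by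
  rcases Nat.eq_zero_or_pos n with hn | hn
  · subst hn
    have hm0 : m = 0 := Nat.le_zero.mp hm
    subst hm0
    refine ⟨fun k => 0, fun x _ _ _ => ?_⟩
    simp
  set p : ℂ[X] := ∏ k, (X - C (z k)) with hp
  set q : ℂ[X] := ∏ j, (X - C (ζ j)) with hq
  set P : Fin n → ℂ[X] := fun k => ∏ j ∈ univ.erase k, (X - C (z j)) with hP
  have hfac : ∀ k, p = (X - C (z k)) * P k := fun k =>
    (mul_prod_erase univ _ (mem_univ k)).symm
  have hPOne : ∀ k, (P k).eval (z k) ≠ 0 := by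
    intro k
    simp only [hP, eval_prod, eval_sub, eval_X, eval_C]
    exact prod_ne_zero_iff.mpr fun j hj =>
      sub_ne_zero.mpr fun e => (mem_erase.mp hj).1 (hz e.symm)
  set γ : Fin n → ℂ := fun k => q.eval (z k) / (P k).eval (z k) with hγ
  have hPzero : ∀ j k, k ≠ j → (P j).eval (z k) = 0 := by
    intro j k hkj
    simp only [hP, eval_prod]
    exact prod_eq_zero (mem_erase.mpr ⟨hkj, mem_univ k⟩) (by simp)
  have hpz : ∀ k, p.eval (z k) = 0 := by
    intro k; rw [hfac k]; simp
  set S : ℂ[X] := ∑ k, C (γ k) * P k with hS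
  set c : ℂ := if m = n then 1 else 0 with hc
  -- degree bounds
  have hPdeg : ∀ k, (P k).natDegree < n := by
    intro k
    have h1 : (P k).natDegree ≤ ∑ j ∈ univ.erase k, (X - C (z j)).natDegree :=
      natDegree_prod_le _ _
    simp only [natDegree_X_sub_C, Finset.sum_const, smul_eq_mul, mul_one,
      Finset.card_erase_of_mem (mem_univ k), Finset.card_univ, Fintype.card_fin] at h1
    exact lt_of_le_of_lt h1 (Nat.sub_lt hn one_pos)
  have hSdeg : S.natDegree < n := by
    rcases n with _ | n'
    · omega
    refine lt_of_le_of_lt (natDegree_sum_le_of_forall_le _ _ fun k _ => ?_) (Nat.lt_succ_self n')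
    exact le_trans (natDegree_C_mul_le _ _) (Nat.lt_succ_iff.mp (hPdeg k))
  have hpm : p.Monic := monic_prod_of_monic _ _ fun k _ => monic_X_sub_C _
  have hqm : q.Monic := monic_prod_of_monic _ _ fun j _ => monic_X_sub_C _
  have hpd : p.natDegree = n := by
    rw [hp, natDegree_prod_of_monic _ _ fun k _ => monic_X_sub_C _]
    simp
  have hqd : q.natDegree = m := by
    rw [hq, natDegree_prod_of_monic _ _ fun j _ => monic_X_sub_C _]
    simp
  have hqcp : (q - C c * p).natDegree < n := by
    by_cases hmn : m = n
    · rw [hc, if_pos hmn, map_one, one_mul]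
      by_cases h0 : q - p = 0
      · rw [h0]; simpa using hn
      · rw [natDegree_lt_iff_degree_lt h0]
        have hdq : q.degree = (n : WithBot ℕ) := by
          rw [degree_eq_natDegree hqm.ne_zero, hqd, hmn]
        have hdp : p.degree = (n : WithBot ℕ) := by
          rw [degree_eq_natDegree hpm.ne_zero, hpd]
        have := degree_sub_lt (hdq.trans hdp.symm) hqm.ne_zero
          (by rw [hpm.leadingCoeff, hqm.leadingCoeff])
        rwa [hdq] at this
    · rw [hc, if_neg hmn, map_zero, zero_mul, sub_zero, hqd]
      exact lt_of_le_of_ne hm hmn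
  -- Lagrange interpolation: q = C c * p + S
  have hinterp : q = C c * p + S := by
    have h0 : q - (C c * p + S) = 0 := by
      apply eq_zero_of_natDegree_lt_card_of_eval_eq_zero _ hz
      · intro k
        have hSe : S.eval (z k) = q.eval (z k) := by
          rw [hS]
          simp only [eval_finset_sum, eval_mul, eval_C]
          rw [Finset.sum_eq_single k]
          · exact div_mul_cancel₀ _ (hPOne k)
          · intro j _ hjk
            rw [hPzero j k (Ne.symm hjk), mul_zero]
          · intro h; exact absurd (mem_univ k) h
        simp [hpz k, hSe]
      · rw [Fintype.card_fin]
        have : q - (C c * p + S) = (q - C c * p) - S := by ring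
        rw [this]
        exact lt_of_le_of_lt (natDegree_sub_le _ _) (max_lt hqcp hSdeg)
    exact sub_eq_zero.mp h0
  -- key polynomial identity
  set T : ℂ[X] := ∑ k, C (γ k) * derivative (P k) with hT
  have hdS : derivative S = T := by
    rw [hS, hT, derivative_sum]
    exact Finset.sum_congr rfl fun k _ => by
      rw [derivative_mul, derivative_C, zero_mul, zero_add]
  have hterm : ∀ k, derivative p * (C (γ k) * P k) - p * (C (γ k) * derivative (P k))
      = C (γ k) * (P k) ^ 2 := by
    intro k
    have h1 : derivative p = P k + (X - C (z k)) * derivative (P k) := by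
      rw [hfac k, derivative_mul, derivative_X_sub_C, one_mul]
    rw [h1, hfac k]; ring
  have hkey : derivative p * q - p * derivative q = ∑ k, C (γ k) * (P k) ^ 2 := by
    calc derivative p * q - p * derivative q
        = ∑ k, (derivative p * (C (γ k) * P k) - p * (C (γ k) * derivative (P k))) := by
          rw [Finset.sum_sub_distrib, ← Finset.mul_sum, ← Finset.mul_sum, ← hS, ← hT,
            hinterp, derivative_add, derivative_mul, derivative_C, zero_mul, zero_add, hdS]
          ring
      _ = ∑ k, C (γ k) * (P k) ^ 2 := Finset.sum_congr rfl fun k _ => hterm k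
  -- pointwise conclusion
  refine ⟨γ, fun x hxz hxζ hpx0 => ?_⟩
  have hpe : eval x p = ∏ k, (x - z k) := by simp [hp, eval_prod]
  have hqe : eval x q = ∏ j, (x - ζ j) := by simp [hq, eval_prod]
  have hqx0 : (∏ j, (x - ζ j)) ≠ 0 :=
    prod_ne_zero_iff.mpr fun j _ => sub_ne_zero.mpr (hxζ j)
  have hpx : eval x p ≠ 0 := hpe ▸ hpx0
  have hqx : eval x q ≠ 0 := hqe ▸ hqx0
  have hkeyx := congrArg (eval x) hkey
  simp only [eval_sub, eval_mul, eval_finset_sum, eval_pow, eval_C] at hkeyx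
  have hsum : ∑ k, γ k / (x - z k) ^ 2
      = (eval x (derivative p) * eval x q - eval x p * eval x (derivative q))
        / (eval x p) ^ 2 := by
    rw [hkeyx, Finset.sum_div]
    refine Finset.sum_congr rfl fun k _ => ?_
    have hzk : x - z k ≠ 0 := sub_ne_zero.mpr (hxz k)
    have hpf : eval x p = (x - z k) * eval x (P k) := by rw [hfac k]; simp
    have hPk0 : eval x (P k) ≠ 0 := by
      intro h0; exact hpx (by rw [hpf, h0, mul_zero])
    rw [hpf]
    field_simp
  rw [← hpe, ← hqe, hsum]
  field_simp
end

section
/- Let n ≥ 1, let c_1, …, c_n be pairwise distinct real numbers in [−1, 1], and let z_1, …, z_n be pairwise distinct complex numbers, closed under complex conjugation, with |z_k| > 1 for all k. Then det((c_j − z_k)^{−2})_{j,k} ≠ 0. -/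
open Finset Equiv Matrix BigOperators

namespace Stmt11



variable {m : ℕ}

lemma inv_mul_split {a b : ℂ} (ha : a ≠ 0) (hb : b ≠ 0) (hab : b - a ≠ 0) :
    a⁻¹ * b⁻¹ = (a⁻¹ - b⁻¹) * (b - a)⁻¹ := by
  rw [inv_sub_inv ha hb]
  field_simp

lemma inv_inv_split {d1 d2 : ℂ} (h1 : d1 ≠ 0) (h2 : d2 ≠ 0) (h3 : d1 + d2 ≠ 0) :
    d1⁻¹ * d2⁻¹ = (d1 + d2)⁻¹ * (d1⁻¹ + d2⁻¹) := by
  field_simp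
  ring

lemma sumPD (x y : Fin (m+1) → ℂ) (hy : Function.Injective y)
    (hxy : ∀ i k, x i ≠ y k)
    (ε : Equiv.Perm (Fin (m+1)) → ℂ) (s : ℂ)
    (hmul : ∀ (ρ : Equiv.Perm (Fin (m+1))) (i₀ : Fin m),
      ε (ρ * Equiv.swap 0 i₀.succ) = s * ε ρ) (k : Fin (m+1)) :
    ∑ ρ ∈ univ.filter (fun ρ : Equiv.Perm (Fin (m+1)) => ρ 0 ≠ k),
      ε ρ * ((y k - y (ρ 0))⁻¹ * ∏ i : Fin m, (x i.succ - y (ρ i.succ))⁻¹)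
    = s * ((∑ ρ ∈ univ.filter (fun ρ : Equiv.Perm (Fin (m+1)) => ρ 0 = k),
        ε ρ * ∏ i : Fin m, (x i.succ - y (ρ i.succ))⁻¹) *
        ((∑ i : Fin m, (x i.succ - y k)⁻¹) + ∑ l ∈ univ.erase k, (y k - y l)⁻¹)) := by
  have hre : ∀ ρ ∈ univ.filter (fun ρ : Equiv.Perm (Fin (m+1)) => ρ 0 = k),
      ∑ l ∈ univ.erase k, (y k - y l)⁻¹ = ∑ i₀ : Fin m, (y k - y (ρ i₀.succ))⁻¹ := by
    intro ρ hρ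
    simp only [mem_filter, mem_univ, true_and] at hρ
    refine (Finset.sum_bij' (fun i₀ _ => ρ i₀.succ)
      (fun l hl => (ρ.symm l).pred (by
        simp only [mem_erase] at hl
        intro h0
        exact hl.1 (by rw [← Equiv.apply_symm_apply ρ l, h0, hρ])))
      ?_ ?_ ?_ ?_ ?_).symm
    · intro i₀ _
      simp only [mem_erase, mem_univ, and_true]
      intro h
      exact (Fin.succ_ne_zero i₀) (ρ.injective (h.trans hρ.symm))
    · intro l hl; exact mem_univ _
    · intro i₀ _
      simp
    · intro l hl
      simp [Fin.succ_pred]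
    · intro i₀ _; rfl
  rw [Finset.sum_mul, Finset.mul_sum]
  have step1 : ∀ ρ ∈ univ.filter (fun ρ : Equiv.Perm (Fin (m+1)) => ρ 0 = k),
      s * ((ε ρ * ∏ i : Fin m, (x i.succ - y (ρ i.succ))⁻¹) *
        ((∑ i : Fin m, (x i.succ - y k)⁻¹) + ∑ l ∈ univ.erase k, (y k - y l)⁻¹))
      = ∑ i₀ : Fin m,
        s * ε ρ * ((∏ i : Fin m, (x i.succ - y (ρ i.succ))⁻¹) *
          ((y k - y (ρ i₀.succ))⁻¹ + (x i₀.succ - y k)⁻¹)) := by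
    intro ρ hρ
    rw [hre ρ hρ, ← Finset.sum_add_distrib, Finset.mul_sum, Finset.mul_sum]
    exact Finset.sum_congr rfl (fun i₀ _ => by ring)
  rw [Finset.sum_congr rfl step1, ← Finset.sum_product']
  have hne0 : ∀ ρ' ∈ univ.filter (fun ρ : Equiv.Perm (Fin (m+1)) => ρ 0 ≠ k),
      ρ'.symm k ≠ 0 := by
    intro ρ' hρ'
    simp only [mem_filter, mem_univ, true_and] at hρ'
    intro h0
    exact hρ' (by rw [← h0, Equiv.apply_symm_apply])
  refine (Finset.sum_bij'
    (fun (p : Equiv.Perm (Fin (m+1)) × Fin m) (hp : p ∈ _) => p.1 * Equiv.swap 0 p.2.succ)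
    (fun ρ' hρ' => (ρ' * Equiv.swap 0 ((ρ'.symm k).pred (hne0 ρ' hρ')).succ,
      (ρ'.symm k).pred (hne0 ρ' hρ')))
    ?_ ?_ ?_ ?_ ?_).symm
  · -- hi : maps into filter (≠ k)
    rintro ⟨ρ, i₀⟩ hp
    simp only [mem_product, mem_filter, mem_univ, true_and, and_true] at hp
    simp only [mem_filter, mem_univ, true_and, Equiv.Perm.mul_apply, Equiv.swap_apply_left]
    intro h
    exact (Fin.succ_ne_zero i₀) (ρ.injective (h.trans hp.symm))
  · -- hj : reverse maps into product set
    intro ρ' hρ'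
    simp only [mem_product, mem_filter, mem_univ, true_and, and_true,
      Equiv.Perm.mul_apply]
    rw [Equiv.swap_apply_left, Fin.succ_pred, Equiv.apply_symm_apply]
  · -- left inverse
    rintro ⟨ρ, i₀⟩ hp
    simp only [mem_product, mem_filter, mem_univ, true_and, and_true] at hp
    have hsymm : (ρ * Equiv.swap 0 i₀.succ).symm k = i₀.succ := by
      rw [Equiv.symm_apply_eq, Equiv.Perm.mul_apply, Equiv.swap_apply_right, hp]
    have hpred : ∀ (h : (ρ * Equiv.swap 0 i₀.succ).symm k ≠ 0),
        ((ρ * Equiv.swap 0 i₀.succ).symm k).pred h = i₀ := fun h => by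
      simp only [hsymm, Fin.pred_succ]
    ext : 1
    · dsimp only
      simp only [hpred]
      exact Equiv.mul_swap_mul_self 0 i₀.succ ρ
    · dsimp only
      simp only [hpred]
  · -- right inverse
    intro ρ' hρ'
    simp only
    rw [Fin.succ_pred, Equiv.mul_swap_mul_self]
  · -- values agree
    rintro ⟨ρ, i₀⟩ hp
    simp only [mem_product, mem_filter, mem_univ, true_and, and_true] at hp
    simp only
    have h1 : (ρ * Equiv.swap 0 i₀.succ) 0 = ρ i₀.succ := by
      rw [Equiv.Perm.mul_apply, Equiv.swap_apply_left]
    have hW1 : (∏ i : Fin m, (x i.succ - y ((ρ * Equiv.swap 0 i₀.succ) i.succ))⁻¹)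
        = (x i₀.succ - y k)⁻¹ * ∏ i ∈ univ.erase i₀, (x i.succ - y (ρ i.succ))⁻¹ := by
      rw [← Finset.mul_prod_erase univ _ (mem_univ i₀)]
      congr 1
      · rw [Equiv.Perm.mul_apply, Equiv.swap_apply_right, hp]
      · refine Finset.prod_congr rfl (fun i hi => ?_)
        simp only [mem_erase, mem_univ, and_true] at hi
        rw [Equiv.Perm.mul_apply, Equiv.swap_apply_of_ne_of_ne (Fin.succ_ne_zero i)
          (fun h => hi (Fin.succ_injective _ h))]
    have hW2 : (∏ i : Fin m, (x i.succ - y (ρ i.succ))⁻¹)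
        = (x i₀.succ - y (ρ i₀.succ))⁻¹ * ∏ i ∈ univ.erase i₀, (x i.succ - y (ρ i.succ))⁻¹ :=
      (Finset.mul_prod_erase univ _ (mem_univ i₀)).symm
    rw [hmul ρ i₀, h1, hW1, hW2]
    have hne1 : y k - y (ρ i₀.succ) ≠ 0 := by
      rw [sub_ne_zero]
      intro h
      have := hy h
      rw [← hp] at this
      exact (Fin.succ_ne_zero i₀) (ρ.injective this.symm)
    have hne2 : x i₀.succ - y k ≠ 0 := sub_ne_zero.mpr (hxy _ _)
    have hd3 : x i₀.succ - y (ρ i₀.succ) = (y k - y (ρ i₀.succ)) + (x i₀.succ - y k) := by ring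
    have key : (y k - y (ρ i₀.succ))⁻¹ * (x i₀.succ - y k)⁻¹
        = (x i₀.succ - y (ρ i₀.succ))⁻¹ * ((y k - y (ρ i₀.succ))⁻¹ + (x i₀.succ - y k)⁻¹) := by
      rw [hd3]
      exact inv_inv_split hne1 hne2 (by rw [← hd3]; exact sub_ne_zero.mpr (hxy _ _))
    linear_combination (s * ε ρ * (∏ i ∈ univ.erase i₀, (x i.succ - y (ρ i.succ))⁻¹)) * key.symm


lemma det_form {n : ℕ} (f : Fin n → Fin n → ℂ) :
    Matrix.det (Matrix.of f) = ∑ σ : Equiv.Perm (Fin n),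
      ((Equiv.Perm.sign σ : ℤ) : ℂ) * ∏ i, f i (σ i) := by
  rw [← Matrix.det_transpose, Matrix.det_apply']
  rfl

lemma per_form {n : ℕ} (f : Fin n → Fin n → ℂ) :
    Matrix.permanent (Matrix.of f) = ∑ σ : Equiv.Perm (Fin n), ∏ i, f i (σ i) := by
  rw [← Matrix.permanent_transpose, Matrix.permanent]
  rfl

lemma fiber_eq (k : Fin (m+1)) (F : Equiv.Perm (Fin (m+1)) → ℂ) :
    ∑ σ ∈ univ.filter (fun σ : Equiv.Perm (Fin (m+1)) => σ 0 = k), F σ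
      = ∑ e : Equiv.Perm (Fin m), F (Equiv.Perm.decomposeFin.symm (k, e)) := by
  refine (Finset.sum_bij' (fun (e : Equiv.Perm (Fin m)) (_ : e ∈ univ) =>
      Equiv.Perm.decomposeFin.symm (k, e))
    (fun σ _ => (Equiv.Perm.decomposeFin σ).2) ?_ ?_ ?_ ?_ ?_).symm
  · intro e _
    simp only [mem_filter, mem_univ, true_and]
    exact Equiv.Perm.decomposeFin_symm_apply_zero k e
  · intro σ _; exact mem_univ _
  · intro e _
    simp
  · intro σ hσ
    simp only [mem_filter, mem_univ, true_and] at hσ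
    have h0 : (Equiv.Perm.decomposeFin σ).1 = σ 0 := by
      conv_rhs => rw [← Equiv.symm_apply_apply Equiv.Perm.decomposeFin σ]
      exact (Equiv.Perm.decomposeFin_symm_apply_zero _ _).symm
    show Equiv.Perm.decomposeFin.symm (k, (Equiv.Perm.decomposeFin σ).2) = σ
    rw [← hσ, ← h0]
    exact Equiv.symm_apply_apply _ _
  · intro e _; rfl

lemma fiber2 (k : Fin (m+1)) (F : Equiv.Perm (Fin (m+1)) → ℂ) :
    ∑ l ∈ univ.erase k, ∑ σ ∈ univ.filter (fun σ : Equiv.Perm (Fin (m+1)) => σ 0 = l), F σ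
      = ∑ σ ∈ univ.filter (fun σ : Equiv.Perm (Fin (m+1)) => σ 0 ≠ k), F σ := by
  rw [← Finset.sum_fiberwise_of_maps_to (g := fun σ : Equiv.Perm (Fin (m+1)) => σ 0)
    (fun σ hσ => by
      simp only [mem_filter, mem_univ, true_and] at hσ
      exact mem_erase.mpr ⟨hσ, mem_univ _⟩) F]
  refine Finset.sum_congr rfl (fun l hl => ?_)
  simp only [mem_erase, mem_univ, and_true] at hl
  congr 1
  ext σ
  simp only [mem_filter, mem_univ, true_and]
  constructor
  · intro h; exact ⟨by rw [h]; exact hl, h⟩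
  · intro h; exact h.2


section BorchardtAux

variable (x y : Fin (m+1) → ℂ)

/-- `S k` in the informal proof. -/
noncomputable def SS (k : Fin (m+1)) : ℂ :=
  (∑ i : Fin m, (x i.succ - y k)⁻¹) + ∑ l ∈ univ.erase k, (y k - y l)⁻¹

noncomputable def WW (σ : Equiv.Perm (Fin (m+1))) : ℂ :=
  ∏ i : Fin m, (x i.succ - y (σ i.succ))⁻¹

noncomputable def WW2 (σ : Equiv.Perm (Fin (m+1))) : ℂ :=
  ∏ i : Fin m, ((x i.succ - y (σ i.succ)) ^ 2)⁻¹

noncomputable def DD (k : Fin (m+1)) : ℂ :=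
  ∑ σ ∈ univ.filter (fun σ : Equiv.Perm (Fin (m+1)) => σ 0 = k),
    ((Equiv.Perm.sign σ : ℤ) : ℂ) * WW x y σ

noncomputable def PP (k : Fin (m+1)) : ℂ :=
  ∑ σ ∈ univ.filter (fun σ : Equiv.Perm (Fin (m+1)) => σ 0 = k), WW x y σ

noncomputable def QQ (k : Fin (m+1)) : ℂ :=
  ∑ σ ∈ univ.filter (fun σ : Equiv.Perm (Fin (m+1)) => σ 0 = k),
    ((Equiv.Perm.sign σ : ℤ) : ℂ) * WW2 x y σ

lemma rep_det :
    Matrix.det (Matrix.of fun i k => (x i - y k)⁻¹)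
      = ∑ k, (x 0 - y k)⁻¹ * DD x y k := by
  rw [det_form]
  rw [← Finset.sum_fiberwise_of_maps_to (g := fun σ : Equiv.Perm (Fin (m+1)) => σ 0)
    (fun σ _ => mem_univ _)]
  refine Finset.sum_congr rfl (fun k _ => ?_)
  rw [DD, Finset.mul_sum]
  refine Finset.sum_congr rfl (fun σ hσ => ?_)
  simp only [mem_filter, mem_univ, true_and] at hσ
  rw [Fin.prod_univ_succ, hσ, WW]
  ring

lemma rep_per :
    Matrix.permanent (Matrix.of fun i k => (x i - y k)⁻¹)
      = ∑ k, (x 0 - y k)⁻¹ * PP x y k := by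
  rw [per_form]
  rw [← Finset.sum_fiberwise_of_maps_to (g := fun σ : Equiv.Perm (Fin (m+1)) => σ 0)
    (fun σ _ => mem_univ _)]
  refine Finset.sum_congr rfl (fun k _ => ?_)
  rw [PP, Finset.mul_sum]
  refine Finset.sum_congr rfl (fun σ hσ => ?_)
  simp only [mem_filter, mem_univ, true_and] at hσ
  rw [Fin.prod_univ_succ, hσ, WW]

lemma rep_det2 :
    Matrix.det (Matrix.of fun i k => ((x i - y k) ^ 2)⁻¹)
      = ∑ k, ((x 0 - y k)⁻¹) ^ 2 * QQ x y k := by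
  rw [det_form]
  rw [← Finset.sum_fiberwise_of_maps_to (g := fun σ : Equiv.Perm (Fin (m+1)) => σ 0)
    (fun σ _ => mem_univ _)]
  refine Finset.sum_congr rfl (fun k _ => ?_)
  rw [QQ, Finset.mul_sum]
  refine Finset.sum_congr rfl (fun σ hσ => ?_)
  simp only [mem_filter, mem_univ, true_and] at hσ
  rw [Fin.prod_univ_succ, hσ, WW2, inv_pow]
  ring

lemma QQ_eq_DD_mul_PP
    (IH : ∀ x' y' : Fin m → ℂ, Function.Injective y' → (∀ i k, x' i ≠ y' k) →
      Matrix.det (Matrix.of fun i k => ((x' i - y' k) ^ 2)⁻¹)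
        = Matrix.det (Matrix.of fun i k => (x' i - y' k)⁻¹) *
          Matrix.permanent (Matrix.of fun i k => (x' i - y' k)⁻¹))
    (hy : Function.Injective y) (hxy : ∀ i k, x i ≠ y k) (k : Fin (m+1)) :
    QQ x y k = DD x y k * PP x y k := by
  have hsgn : ∀ e : Equiv.Perm (Fin m),
      ((Equiv.Perm.sign (Equiv.Perm.decomposeFin.symm (k, e)) : ℤ) : ℂ)
        = (if k = 0 then 1 else -1) * ((Equiv.Perm.sign e : ℤ) : ℂ) := by
    intro e
    rw [Equiv.Perm.decomposeFin.symm_sign]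
    split_ifs <;> simp
  have happ : ∀ (e : Equiv.Perm (Fin m)) (i : Fin m),
      (Equiv.Perm.decomposeFin.symm (k, e)) i.succ = Equiv.swap 0 k (e i).succ :=
    fun e i => Equiv.Perm.decomposeFin_symm_apply_succ e k i
  set x' : Fin m → ℂ := fun i => x i.succ with hx'
  set y' : Fin m → ℂ := fun j => y (Equiv.swap 0 k j.succ) with hy'
  have hy'inj : Function.Injective y' := by
    intro a b hab
    have := hy hab
    have := (Equiv.swap 0 k).injective this
    exact Fin.succ_injective _ this
  have hxy' : ∀ i j, x' i ≠ y' j := fun i j => hxy _ _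
  have hQ : QQ x y k = (if k = 0 then 1 else -1) *
      Matrix.det (Matrix.of fun i j => ((x' i - y' j) ^ 2)⁻¹) := by
    rw [QQ, fiber_eq, det_form, Finset.mul_sum]
    refine Finset.sum_congr rfl (fun e _ => ?_)
    rw [hsgn, WW2]
    have : ∀ i : Fin m, ((x i.succ - y ((Equiv.Perm.decomposeFin.symm (k, e)) i.succ)) ^ 2)⁻¹
        = ((x' i - y' (e i)) ^ 2)⁻¹ := fun i => by rw [happ]
    rw [Finset.prod_congr rfl (fun i _ => this i)]
    ring
  have hD : DD x y k = (if k = 0 then 1 else -1) *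
      Matrix.det (Matrix.of fun i j => (x' i - y' j)⁻¹) := by
    rw [DD, fiber_eq, det_form, Finset.mul_sum]
    refine Finset.sum_congr rfl (fun e _ => ?_)
    rw [hsgn, WW]
    have : ∀ i : Fin m, (x i.succ - y ((Equiv.Perm.decomposeFin.symm (k, e)) i.succ))⁻¹
        = (x' i - y' (e i))⁻¹ := fun i => by rw [happ]
    rw [Finset.prod_congr rfl (fun i _ => this i)]
    ring
  have hP : PP x y k = Matrix.permanent (Matrix.of fun i j => (x' i - y' j)⁻¹) := by
    rw [PP, fiber_eq, per_form]
    refine Finset.sum_congr rfl (fun e _ => ?_)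
    rw [WW]
    exact Finset.prod_congr rfl (fun i _ => by rw [happ])
  rw [hQ, hD, hP, IH x' y' hy'inj hxy']
  split_ifs <;> ring

end BorchardtAux

theorem borchardt : ∀ (n : ℕ) (x y : Fin n → ℂ), Function.Injective y →
    (∀ i k, x i ≠ y k) →
    Matrix.det (Matrix.of fun i k => ((x i - y k) ^ 2)⁻¹)
      = Matrix.det (Matrix.of fun i k => (x i - y k)⁻¹) *
        Matrix.permanent (Matrix.of fun i k => (x i - y k)⁻¹) := by
  intro n
  induction n with
  | zero =>
    intro x y _ _
    simp [Matrix.det_isEmpty, Matrix.permanent_isEmpty]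
  | succ m IH =>
    intro x y hy hxy
    have hu : ∀ k, x 0 - y k ≠ 0 := fun k => sub_ne_zero.mpr (hxy 0 k)
    -- the two key redirect identities
    have hsumP : ∀ k : Fin (m+1),
        ∑ σ ∈ univ.filter (fun σ : Equiv.Perm (Fin (m+1)) => σ 0 ≠ k),
          (y k - y (σ 0))⁻¹ * WW x y σ = PP x y k * SS x y k := by
      intro k
      have := sumPD x y hy hxy (fun _ => (1 : ℂ)) 1 (fun ρ i₀ => by rw [one_mul]) k
      simpa [WW, PP, SS, one_mul] using this
    have hsumD : ∀ k : Fin (m+1),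
        ∑ σ ∈ univ.filter (fun σ : Equiv.Perm (Fin (m+1)) => σ 0 ≠ k),
          ((Equiv.Perm.sign σ : ℤ) : ℂ) * ((y k - y (σ 0))⁻¹ * WW x y σ)
          = -(DD x y k * SS x y k) := by
      intro k
      have hmul : ∀ (ρ : Equiv.Perm (Fin (m+1))) (i₀ : Fin m),
          ((Equiv.Perm.sign (ρ * Equiv.swap 0 i₀.succ) : ℤ) : ℂ)
            = (-1 : ℂ) * ((Equiv.Perm.sign ρ : ℤ) : ℂ) := by
        intro ρ i₀
        rw [Equiv.Perm.sign_mul, Equiv.Perm.sign_swap (Ne.symm (Fin.succ_ne_zero i₀))]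
        push_cast
        ring
      have h := sumPD x y hy hxy (fun ρ => ((Equiv.Perm.sign ρ : ℤ) : ℂ)) (-1) hmul k
      simp only [WW, DD, SS] at h ⊢
      rw [h]
      ring
    -- assemble
    rw [rep_det, rep_per, rep_det2, Finset.sum_mul_sum]
    have split : ∀ k : Fin (m+1),
        ∑ l, (x 0 - y k)⁻¹ * DD x y k * ((x 0 - y l)⁻¹ * PP x y l)
          = ((x 0 - y k)⁻¹) ^ 2 * (DD x y k * PP x y k)
            + ∑ l ∈ univ.erase k,
                (x 0 - y k)⁻¹ * DD x y k * ((x 0 - y l)⁻¹ * PP x y l) := by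
      intro k
      rw [← Finset.add_sum_erase univ _ (mem_univ k)]
      ring_nf
    rw [Finset.sum_congr rfl (fun k _ => split k), Finset.sum_add_distrib]
    have hQDP : ∀ k, QQ x y k = DD x y k * PP x y k :=
      QQ_eq_DD_mul_PP x y IH hy hxy
    have hmain : ∑ k, ((x 0 - y k)⁻¹) ^ 2 * QQ x y k
        = ∑ k, ((x 0 - y k)⁻¹) ^ 2 * (DD x y k * PP x y k) :=
      Finset.sum_congr rfl (fun k _ => by rw [hQDP])
    rw [hmain]
    -- remains: the off-diagonal part is zero
    have hoff : ∑ k, ∑ l ∈ univ.erase k,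
        (x 0 - y k)⁻¹ * DD x y k * ((x 0 - y l)⁻¹ * PP x y l) = 0 := by
      have huv : ∀ k, ∀ l ∈ univ.erase k,
          (x 0 - y k)⁻¹ * (x 0 - y l)⁻¹
            = ((x 0 - y k)⁻¹ - (x 0 - y l)⁻¹) * (y k - y l)⁻¹ := by
        intro k l hl
        simp only [mem_erase, mem_univ, and_true] at hl
        have h1 : y k - y l ≠ 0 := sub_ne_zero.mpr (fun h => hl (hy h).symm)
        rw [show (y k - y l) = (x 0 - y l) - (x 0 - y k) from by ring]
        exact inv_mul_split (hu k) (hu l) (by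
          rw [show (x 0 - y l) - (x 0 - y k) = y k - y l from by ring]
          exact h1)
      have hT : ∀ k, ∀ l ∈ univ.erase k,
          (x 0 - y k)⁻¹ * DD x y k * ((x 0 - y l)⁻¹ * PP x y l)
            = (x 0 - y k)⁻¹ * DD x y k * PP x y l * (y k - y l)⁻¹
              - DD x y k * ((x 0 - y l)⁻¹ * PP x y l * (y k - y l)⁻¹) := by
        intro k l hl
        have := huv k l hl
        calc (x 0 - y k)⁻¹ * DD x y k * ((x 0 - y l)⁻¹ * PP x y l)
            = ((x 0 - y k)⁻¹ * (x 0 - y l)⁻¹) * (DD x y k * PP x y l) := by ring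
          _ = (((x 0 - y k)⁻¹ - (x 0 - y l)⁻¹) * (y k - y l)⁻¹) * (DD x y k * PP x y l) := by
              rw [this]
          _ = _ := by ring
      rw [Finset.sum_congr rfl (fun k _ => Finset.sum_congr rfl (hT k))]
      rw [Finset.sum_congr rfl (fun k _ => Finset.sum_sub_distrib _ _)]
      rw [Finset.sum_sub_distrib]
      -- first piece
      have hfirst : ∀ k : Fin (m+1), ∑ l ∈ univ.erase k,
          (x 0 - y k)⁻¹ * DD x y k * PP x y l * (y k - y l)⁻¹
            = (x 0 - y k)⁻¹ * DD x y k * (PP x y k * SS x y k) := by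
        intro k
        have : ∑ l ∈ univ.erase k, PP x y l * (y k - y l)⁻¹
            = PP x y k * SS x y k := by
          rw [← hsumP k, ← fiber2 k]
          refine Finset.sum_congr rfl (fun l hl => ?_)
          rw [PP, Finset.sum_mul]
          refine Finset.sum_congr rfl (fun σ hσ => ?_)
          simp only [mem_filter, mem_univ, true_and] at hσ
          rw [hσ]
          ring
        calc ∑ l ∈ univ.erase k, (x 0 - y k)⁻¹ * DD x y k * PP x y l * (y k - y l)⁻¹
            = (x 0 - y k)⁻¹ * DD x y k * ∑ l ∈ univ.erase k, PP x y l * (y k - y l)⁻¹ := by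
              rw [Finset.mul_sum]
              exact Finset.sum_congr rfl (fun l _ => by ring)
          _ = _ := by rw [this]
      -- second piece, after swapping the order of summation
      have hswap : ∑ k : Fin (m+1), ∑ l ∈ univ.erase k,
          DD x y k * ((x 0 - y l)⁻¹ * PP x y l * (y k - y l)⁻¹)
            = ∑ l : Fin (m+1), ∑ k ∈ univ.erase l,
          DD x y k * ((x 0 - y l)⁻¹ * PP x y l * (y k - y l)⁻¹) := by
        refine Finset.sum_comm' ?_
        intro a b
        simp only [mem_univ, mem_erase, true_and, and_true]
        exact ⟨fun h => Ne.symm h, fun h => Ne.symm h⟩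
      have hsecond : ∀ l : Fin (m+1), ∑ k ∈ univ.erase l,
          DD x y k * ((x 0 - y l)⁻¹ * PP x y l * (y k - y l)⁻¹)
            = (x 0 - y l)⁻¹ * PP x y l * (DD x y l * SS x y l) := by
        intro l
        have : ∑ k ∈ univ.erase l, DD x y k * (y k - y l)⁻¹
            = DD x y l * SS x y l := by
          have h2 : ∑ k ∈ univ.erase l, DD x y k * (y k - y l)⁻¹
              = -∑ σ ∈ univ.filter (fun σ : Equiv.Perm (Fin (m+1)) => σ 0 ≠ l),
                  ((Equiv.Perm.sign σ : ℤ) : ℂ) * ((y l - y (σ 0))⁻¹ * WW x y σ) := by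
            rw [← fiber2 l, ← Finset.sum_neg_distrib]
            refine Finset.sum_congr rfl (fun k hk => ?_)
            rw [DD, Finset.sum_mul, ← Finset.sum_neg_distrib]
            refine Finset.sum_congr rfl (fun σ hσ => ?_)
            simp only [mem_filter, mem_univ, true_and] at hσ
            rw [hσ]
            have hkl : y k - y l ≠ 0 := by
              simp only [mem_erase, mem_univ, and_true] at hk
              exact sub_ne_zero.mpr (fun h => hk (hy h))
            rw [show y l - y k = -(y k - y l) from by ring, inv_neg]
            ring
          rw [h2, hsumD l]
          ring
        calc ∑ k ∈ univ.erase l, DD x y k * ((x 0 - y l)⁻¹ * PP x y l * (y k - y l)⁻¹)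
            = (x 0 - y l)⁻¹ * PP x y l * ∑ k ∈ univ.erase l, DD x y k * (y k - y l)⁻¹ := by
              rw [Finset.mul_sum]
              exact Finset.sum_congr rfl (fun k _ => by ring)
          _ = _ := by rw [this]
      rw [Finset.sum_congr rfl (fun k _ => hfirst k), hswap,
        Finset.sum_congr rfl (fun l _ => hsecond l)]
      rw [← Finset.sum_sub_distrib]
      refine Finset.sum_eq_zero (fun k _ => by ring)
    rw [hoff, add_zero]




theorem cauchy_det_ne_zero {n : ℕ} (x y : Fin n → ℂ)
    (hx : Function.Injective x) (hy : Function.Injective y)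
    (hxy : ∀ i k, x i ≠ y k) :
    Matrix.det (Matrix.of fun i k => (x i - y k)⁻¹) ≠ 0 := by
  intro h0
  obtain ⟨v, hv, hMv⟩ := Matrix.exists_mulVec_eq_zero_iff.mpr h0
  obtain ⟨k₀, hk₀⟩ := Function.ne_iff.mp hv
  set P : Polynomial ℂ := ∑ k : Fin n, Polynomial.C (v k) *
      ∏ l ∈ univ.erase k, (Polynomial.X - Polynomial.C (y l)) with hP
  have hdeg : P.natDegree < Fintype.card (Fin n) := by
    have hn : 1 ≤ Fintype.card (Fin n) := by
      simp only [Fintype.card_fin]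
      have : k₀.val < n := k₀.isLt
      omega
    have : P.natDegree ≤ Fintype.card (Fin n) - 1 := by
      refine Polynomial.natDegree_sum_le_of_forall_le _ _ (fun k _ => ?_)
      refine le_trans (Polynomial.natDegree_C_mul_le _ _) ?_
      refine le_trans (Polynomial.natDegree_prod_le _ _) ?_
      have : ∀ l ∈ univ.erase k, (Polynomial.X - Polynomial.C (y l)).natDegree ≤ 1 :=
        fun l _ => le_of_eq (Polynomial.natDegree_X_sub_C _)
      refine le_trans (Finset.sum_le_sum this) ?_
      simp [Finset.card_erase_of_mem, Fintype.card_fin]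
    omega
  have heval : ∀ j, P.eval (x j) = 0 := by
    intro j
    have hrow : ∑ k, (x j - y k)⁻¹ * v k = 0 := by
      have := congrFun hMv j
      simpa [Matrix.mulVec, dotProduct] using this
    have hterm : ∀ k : Fin n, (∏ l ∈ univ.erase k, (x j - y l))
        = (∏ l, (x j - y l)) * (x j - y k)⁻¹ := by
      intro k
      rw [← Finset.mul_prod_erase univ _ (mem_univ k)]
      rw [mul_comm (x j - y k) _, mul_assoc,
        mul_inv_cancel₀ (sub_ne_zero.mpr (hxy j k)), mul_one]
    have : P.eval (x j) = (∏ l, (x j - y l)) * ∑ k, (x j - y k)⁻¹ * v k := by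
      rw [hP]
      simp only [Polynomial.eval_finset_sum, Polynomial.eval_mul, Polynomial.eval_C,
        Polynomial.eval_prod, Polynomial.eval_sub, Polynomial.eval_X]
      rw [Finset.mul_sum]
      refine Finset.sum_congr rfl (fun k _ => ?_)
      rw [hterm k]
      ring
    rw [this, hrow, mul_zero]
  have hPzero : P = 0 :=
    Polynomial.eq_zero_of_natDegree_lt_card_of_eval_eq_zero P hx heval hdeg
  have hevaly : P.eval (y k₀) = v k₀ * ∏ l ∈ univ.erase k₀, (y k₀ - y l) := by
    rw [hP]
    simp only [Polynomial.eval_finset_sum, Polynomial.eval_mul, Polynomial.eval_C,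
      Polynomial.eval_prod, Polynomial.eval_sub, Polynomial.eval_X]
    rw [Finset.sum_eq_single k₀]
    · intro k _ hk
      refine mul_eq_zero_of_right _ ?_
      refine Finset.prod_eq_zero (Finset.mem_erase.mpr ⟨Ne.symm hk, mem_univ _⟩) ?_
      exact sub_self _
    · intro h; exact absurd (mem_univ _) h
  have hprod : (∏ l ∈ univ.erase k₀, (y k₀ - y l)) ≠ 0 := by
    refine Finset.prod_ne_zero_iff.mpr (fun l hl => ?_)
    simp only [mem_erase, mem_univ, and_true] at hl
    exact sub_ne_zero.mpr (fun h => hl (hy h).symm)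
  rw [hPzero] at hevaly
  simp only [Polynomial.eval_zero] at hevaly
  exact hk₀ (by
    have := (mul_eq_zero.mp hevaly.symm).resolve_right hprod
    simpa using this)






/-- Permanent expansion along column 0. -/
lemma per_expand (M : Matrix (Fin (m+1)) (Fin (m+1)) ℂ) :
    M.permanent = ∑ j, M j 0 *
      (Matrix.of fun (r c : Fin m) => M (Equiv.swap 0 j r.succ) c.succ).permanent := by
  rw [Matrix.permanent]
  rw [← Equiv.sum_comp (Equiv.Perm.decomposeFin.symm) (fun σ => ∏ i, M (σ i) i)]
  rw [Fintype.sum_prod_type]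
  refine Finset.sum_congr rfl (fun j _ => ?_)
  rw [Matrix.permanent, Finset.mul_sum]
  refine Finset.sum_congr rfl (fun e _ => ?_)
  rw [Fin.prod_univ_succ, Equiv.Perm.decomposeFin_symm_apply_zero]
  congr 1
  refine Finset.prod_congr rfl (fun i _ => ?_)
  rw [Equiv.Perm.decomposeFin_symm_apply_succ]
  rfl

/-- Permanent is real for conjugation-symmetric column data. -/
lemma per_real {n : ℕ} (c : Fin n → ℝ) (w : Fin n → ℂ)
    (τ : Equiv.Perm (Fin n)) (hτ : ∀ k, w (τ k) = (starRingEnd ℂ) (w k)) :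
    (Matrix.permanent (Matrix.of fun j k => (1 - (c j : ℂ) * w k)⁻¹)).im = 0 := by
  rw [← Complex.conj_eq_iff_im]
  have h1 : (starRingEnd ℂ) (Matrix.permanent (Matrix.of fun j k => (1 - (c j : ℂ) * w k)⁻¹))
      = Matrix.permanent (Matrix.of fun j k => (1 - (c j : ℂ) * w (τ k))⁻¹) := by
    rw [Matrix.permanent, map_sum]
    refine Finset.sum_congr rfl (fun σ _ => ?_)
    rw [map_prod]
    refine Finset.prod_congr rfl (fun i _ => ?_)
    rw [Matrix.of_apply, Matrix.of_apply, map_inv₀]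
    congr 1
    rw [map_sub, _root_.map_one, _root_.map_mul, Complex.conj_ofReal, ← hτ]
  rw [h1]
  have h2 : (Matrix.of fun j k => (1 - (c j : ℂ) * w (τ k))⁻¹)
      = (Matrix.of fun j k => (1 - (c j : ℂ) * w k)⁻¹).submatrix id τ := by
    ext j k
    simp [Matrix.submatrix_apply]
  rw [h2, Matrix.permanent_permute_rows]

set_option maxHeartbeats 1000000 in
/-- Positivity of the pair coefficient. -/
lemma coef_pos (a b : ℝ) (w : ℂ) (ha : |a| ≤ 1) (hb : |b| ≤ 1)
    (hw : ‖w‖ < 1) :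
    0 < ((1 - (a : ℂ) * w)⁻¹ * (1 - (b : ℂ) * (starRingEnd ℂ) w)⁻¹).re := by
  set t := w.re with htdef
  set u := w.im with hudef
  have hs : t ^ 2 + u ^ 2 < 1 := by
    have h := Complex.sq_norm w
    rw [Complex.normSq_apply] at h
    nlinarith [norm_nonneg w]
  have ha2 : a ^ 2 ≤ 1 := by nlinarith [abs_nonneg a, _root_.sq_abs a]
  have hb2 : b ^ 2 ≤ 1 := by nlinarith [abs_nonneg b, _root_.sq_abs b]
  have htle : |t| < 1 := lt_of_le_of_lt (Complex.abs_re_le_norm w) hw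
  have h1a : a * t < 1 := by
    nlinarith [le_abs_self (a*t), abs_mul a t,
      mul_le_mul_of_nonneg_right ha (abs_nonneg t), abs_nonneg t]
  have h1b : b * t < 1 := by
    nlinarith [le_abs_self (b*t), abs_mul b t,
      mul_le_mul_of_nonneg_right hb (abs_nonneg t), abs_nonneg t]
  have hz : ((1 - (a : ℂ) * w) * (1 - (b : ℂ) * (starRingEnd ℂ) w)).re
      = 1 - (a + b) * t + a * b * (t ^ 2 + u ^ 2) := by
    simp [Complex.mul_re, Complex.mul_im, Complex.sub_re, Complex.sub_im,
      Complex.one_re, Complex.one_im, Complex.ofReal_re, Complex.ofReal_im,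
      Complex.conj_re, Complex.conj_im]
    ring
  have hq : (a + b)^2 ≤ (1 + a*b)^2 := by nlinarith [mul_nonneg (sub_nonneg.mpr ha2) (sub_nonneg.mpr hb2)]
  have h1p : 0 ≤ 1 + a * b := by nlinarith [sq_nonneg (a + b)]
  have ht2 : t^2 < 1 := by nlinarith [sq_nonneg u]
  have hN : 0 < 1 - (a + b) * t + a * b * (t ^ 2 + u ^ 2) := by
    rcases le_or_gt 0 (a * b) with hab | hab
    · nlinarith [mul_pos (by linarith : (0:ℝ) < 1 - a*t) (by linarith : (0:ℝ) < 1 - b*t),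
        mul_nonneg hab (sq_nonneg u)]
    · rcases eq_or_lt_of_le h1p with heq | hlt
      · have hq0 : (a + b)^2 ≤ 0 := by
          rw [← heq] at hq
          simpa using hq
        have hab1 : a * b = -1 := by linarith
        have hqz : a + b = 0 := by
          have h0 : (a+b)^2 = 0 := le_antisymm hq0 (sq_nonneg _)
          exact pow_eq_zero_iff (two_ne_zero) |>.mp h0
        rw [hqz, hab1]
        nlinarith
      · nlinarith [sq_nonneg ((1 + a*b)*t - (a + b)), hq, hs, ht2, hlt,
          mul_pos hlt hlt, mul_nonneg (le_of_lt hlt) (sub_nonneg.mpr (le_of_lt ht2)),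
          mul_nonneg (mul_nonneg (le_of_lt hlt) (le_of_lt hlt))
            (sub_nonneg.mpr (le_of_lt ht2)), hab,
          mul_nonneg (le_of_lt hlt) (sub_nonneg.mpr (le_of_lt hs))]
  have hz1 : (1 - (a : ℂ) * w) ≠ 0 := by
    intro h
    have h1 : (a:ℂ) * w = 1 := by linear_combination -h
    have h2 : ‖(a:ℂ) * w‖ = 1 := by rw [h1]; simp
    rw [norm_mul, Complex.norm_real, Real.norm_eq_abs] at h2
    nlinarith [norm_nonneg w, abs_nonneg a,
      mul_le_mul_of_nonneg_right ha (norm_nonneg w)]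
  have hz2 : (1 - (b : ℂ) * (starRingEnd ℂ) w) ≠ 0 := by
    intro h
    have h1 : (b:ℂ) * (starRingEnd ℂ) w = 1 := by linear_combination -h
    have h2 : ‖(b:ℂ) * (starRingEnd ℂ) w‖ = 1 := by rw [h1]; simp
    rw [norm_mul, Complex.norm_real, Real.norm_eq_abs, Complex.norm_conj] at h2
    nlinarith [norm_nonneg w, abs_nonneg b,
      mul_le_mul_of_nonneg_right hb (norm_nonneg w)]
  rw [← mul_inv, Complex.inv_re]
  have hnsq : 0 < Complex.normSq ((1 - (a : ℂ) * w) * (1 - (b : ℂ) * (starRingEnd ℂ) w)) :=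
    Complex.normSq_pos.mpr (mul_ne_zero hz1 hz2)
  rw [hz]
  positivity

theorem per_pos : ∀ (n : ℕ) (c : Fin n → ℝ) (w : Fin n → ℂ),
    (∀ j, |c j| ≤ 1) → (∀ k, ‖w k‖ < 1) → Function.Injective w →
    ∀ (τ : Equiv.Perm (Fin n)), (∀ k, w (τ k) = (starRingEnd ℂ) (w k)) →
    0 < (Matrix.permanent (Matrix.of fun j k => (1 - (c j : ℂ) * w k)⁻¹)).re := by
  intro n
  induction n using Nat.strong_induction_on with
  | _ n IH =>
  cases n with
  | zero =>
    intro c w _ _ _ τ _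
    rw [Matrix.permanent_isEmpty]
    norm_num
  | succ m =>
    intro c w hc hw hwinj τ hτ
    have hτinv : ∀ k, τ (τ k) = k := by
      intro k
      apply hwinj
      rw [hτ, hτ, Complex.conj_conj]
    by_cases hfix : ∃ k₀, τ k₀ = k₀
    · -- Case A : some w-value is real
      obtain ⟨k₀, hk₀⟩ := hfix
      set e : Equiv.Perm (Fin (m+1)) := Equiv.swap 0 k₀ with he
      set w' : Fin (m+1) → ℂ := fun k => w (e k) with hw'
      set τ' : Equiv.Perm (Fin (m+1)) := (e.trans τ).trans e.symm with hτ'def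
      have hτ'app : ∀ k, τ' k = e.symm (τ (e k)) := fun k => rfl
      have hτ'prop : ∀ k, w' (τ' k) = (starRingEnd ℂ) (w' k) := by
        intro k
        rw [hw']
        simp only [hτ'app, Equiv.apply_symm_apply]
        exact hτ (e k)
      have hτ'0 : τ' 0 = 0 := by
        rw [hτ'app]
        rw [show e 0 = k₀ from Equiv.swap_apply_left 0 k₀, hk₀]
        rw [Equiv.symm_swap]
        exact Equiv.swap_apply_right 0 k₀
      have hperm : (Matrix.of fun j k => (1 - (c j : ℂ) * w k)⁻¹).permanent
          = (Matrix.of fun j k => (1 - (c j : ℂ) * w' k)⁻¹).permanent := by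
        have h2 : (Matrix.of fun j k => (1 - (c j : ℂ) * w' k)⁻¹)
            = (Matrix.of fun j k => (1 - (c j : ℂ) * w k)⁻¹).submatrix id e := by
          ext j k
          simp [hw', Matrix.submatrix_apply]
        rw [h2, Matrix.permanent_permute_rows]
      rw [hperm, per_expand]
      -- w' 0 is real
      have h0fix : w' 0 = (starRingEnd ℂ) (w' 0) := by
        have h := hτ'prop 0
        rw [hτ'0] at h
        exact h
      have him : (w' 0).im = 0 := by
        have h := congrArg Complex.im h0fix
        simp only [Complex.conj_im] at h
        linarith
      have hw'0 : w' 0 = (((w' 0).re : ℝ) : ℂ) := by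
        apply Complex.ext <;> simp [him]
      have htabs : |(w' 0).re| < 1 := lt_of_le_of_lt (Complex.abs_re_le_norm (w' 0)) (hw (e 0))
      -- structures for the minors
      have hτ'ne : ∀ k : Fin m, τ' k.succ ≠ 0 :=
        fun k h => (Fin.succ_ne_zero k) (τ'.injective (h.trans hτ'0.symm))
      have hτ'symm0 : τ'.symm 0 = 0 := by
        have h := Equiv.symm_apply_apply τ' 0
        rwa [hτ'0] at h
      have hτ'symmne : ∀ k : Fin m, τ'.symm k.succ ≠ 0 :=
        fun k h => (Fin.succ_ne_zero k) (τ'.symm.injective (h.trans hτ'symm0.symm))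
      set τ₂ : Equiv.Perm (Fin m) :=
        ⟨fun k => (τ' k.succ).pred (hτ'ne k),
         fun k => (τ'.symm k.succ).pred (hτ'symmne k),
         fun k => by simp [Fin.succ_pred, Fin.pred_succ],
         fun k => by simp [Fin.succ_pred, Fin.pred_succ]⟩ with hτ₂def
      rw [Complex.re_sum]
      refine Finset.sum_pos (fun j _ => ?_) ⟨0, mem_univ 0⟩
      -- the minor
      have hminor : (Matrix.of fun (r c' : Fin m) =>
          (Matrix.of fun j k => (1 - (c j : ℂ) * w' k)⁻¹) (Equiv.swap 0 j r.succ) c'.succ)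
          = (Matrix.of fun (r c' : Fin m) =>
            (1 - ((c (Equiv.swap 0 j r.succ) : ℝ) : ℂ) * (w' c'.succ))⁻¹) := by
        ext r c'
        simp [Matrix.of_apply]
      rw [hminor]
      have hPim : (Matrix.permanent (Matrix.of fun (r c' : Fin m) =>
          (1 - ((c (Equiv.swap 0 j r.succ) : ℝ) : ℂ) * (w' c'.succ))⁻¹)).im = 0 := by
        apply per_real (fun r => c (Equiv.swap 0 j r.succ)) (fun k => w' k.succ) τ₂
        intro k
        show w' ((τ' k.succ).pred (hτ'ne k)).succ = _
        rw [Fin.succ_pred]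
        exact hτ'prop k.succ
      have hPre : 0 < (Matrix.permanent (Matrix.of fun (r c' : Fin m) =>
          (1 - ((c (Equiv.swap 0 j r.succ) : ℝ) : ℂ) * (w' c'.succ))⁻¹)).re := by
        refine IH m (Nat.lt_succ_self m) _ _ (fun r => hc _) (fun k => hw (e k.succ)) ?_ τ₂ ?_
        · intro a b hab
          exact Fin.succ_injective _ (e.injective (hwinj hab))
        · intro k
          show w' ((τ' k.succ).pred (hτ'ne k)).succ = _
          rw [Fin.succ_pred]
          exact hτ'prop k.succ
      -- the coefficient
      have hcoef : (Matrix.of fun j k => (1 - (c j : ℂ) * w' k)⁻¹) j 0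
          = (((1 - c j * (w' 0).re)⁻¹ : ℝ) : ℂ) := by
        rw [Matrix.of_apply]
        rw [hw'0]
        push_cast
        norm_num
      have hcpos : 0 < (1 - c j * (w' 0).re)⁻¹ := by
        apply inv_pos.mpr
        nlinarith [le_abs_self (c j * (w' 0).re), abs_mul (c j) ((w' 0).re),
          mul_le_mul_of_nonneg_right (hc j) (abs_nonneg ((w' 0).re)),
          abs_nonneg ((w' 0).re)]
      rw [hcoef, Complex.re_ofReal_mul]
      exact mul_pos hcpos (by linarith [hPre])
    · -- Case B : no fixed point, conjugate pair
      have hk₁ : τ 0 ≠ 0 := fun h => hfix ⟨0, h⟩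
      cases m with
      | zero => exact absurd (Fin.eq_zero (τ 0)) hk₁
      | succ m' =>
      set e : Equiv.Perm (Fin (m'+2)) := Equiv.swap 1 (τ 0) with he
      have he0 : e 0 = 0 :=
        Equiv.swap_apply_of_ne_of_ne (zero_ne_one) (Ne.symm hk₁)
      have he1 : e 1 = τ 0 := Equiv.swap_apply_left _ _
      set w' : Fin (m'+2) → ℂ := fun k => w (e k) with hw'
      set τ' : Equiv.Perm (Fin (m'+2)) := (e.trans τ).trans e.symm with hτ'def
      have hτ'app : ∀ k, τ' k = e.symm (τ (e k)) := fun k => rfl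
      have hτ'prop : ∀ k, w' (τ' k) = (starRingEnd ℂ) (w' k) := by
        intro k
        rw [hw']
        simp only [hτ'app, Equiv.apply_symm_apply]
        exact hτ (e k)
      have hesymm : e.symm = e := Equiv.symm_swap _ _
      have hτ'0 : τ' 0 = 1 := by
        rw [hτ'app, he0, hesymm]
        exact Equiv.swap_apply_right 1 (τ 0)
      have hτ'1 : τ' 1 = 0 := by
        rw [hτ'app, he1, hesymm, hτinv 0]
        exact he0
      have hperm : (Matrix.of fun j k => (1 - (c j : ℂ) * w k)⁻¹).permanent
          = (Matrix.of fun j k => (1 - (c j : ℂ) * w' k)⁻¹).permanent := by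
        have h2 : (Matrix.of fun j k => (1 - (c j : ℂ) * w' k)⁻¹)
            = (Matrix.of fun j k => (1 - (c j : ℂ) * w k)⁻¹).submatrix id e := by
          ext j k
          simp [hw', Matrix.submatrix_apply]
        rw [h2, Matrix.permanent_permute_rows]
      have hw'1 : w' 1 = (starRingEnd ℂ) (w' 0) := by
        rw [← hτ'0]
        exact hτ'prop 0
      -- index gymnastics for the double minor
      have hτ'symm0 : τ'.symm 0 = 1 := by
        have h := Equiv.symm_apply_apply τ' 1
        rwa [hτ'1] at h
      have hτ'symm1 : τ'.symm 1 = 0 := by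
        have h := Equiv.symm_apply_apply τ' 0
        rwa [hτ'0] at h
      have hne1 : ∀ k : Fin m', τ' k.succ.succ ≠ 0 := by
        intro k h
        have h2 := τ'.injective (h.trans hτ'1.symm)
        rw [← Fin.succ_zero_eq_one] at h2
        exact (Fin.succ_ne_zero k) (Fin.succ_injective _ h2)
      have hne2 : ∀ k : Fin m', τ' k.succ.succ ≠ 1 := fun k h =>
        (Fin.succ_ne_zero k.succ) (τ'.injective (h.trans hτ'0.symm))
      have hne1s : ∀ k : Fin m', τ'.symm k.succ.succ ≠ 0 := by
        intro k h
        have h2 := τ'.symm.injective (h.trans hτ'symm1.symm)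
        rw [← Fin.succ_zero_eq_one] at h2
        exact (Fin.succ_ne_zero k) (Fin.succ_injective _ h2)
      have hne2s : ∀ k : Fin m', τ'.symm k.succ.succ ≠ 1 := fun k h =>
        (Fin.succ_ne_zero k.succ) (τ'.symm.injective (h.trans hτ'symm0.symm))
      have predne : ∀ (x : Fin (m'+2)) (h0 : x ≠ 0), x ≠ 1 → x.pred h0 ≠ 0 := by
        intro x h0 h1 hp
        apply h1
        rw [← Fin.succ_pred x h0, hp, Fin.succ_zero_eq_one]
      set τ₃ : Equiv.Perm (Fin m') :=
        ⟨fun k => ((τ' k.succ.succ).pred (hne1 k)).pred (predne _ (hne1 k) (hne2 k)),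
         fun k => ((τ'.symm k.succ.succ).pred (hne1s k)).pred (predne _ (hne1s k) (hne2s k)),
         fun k => by simp [Fin.succ_pred, Fin.pred_succ],
         fun k => by simp [Fin.succ_pred, Fin.pred_succ]⟩ with hτ₃def
      have hτ₃prop : ∀ k : Fin m', w' (((τ₃ k).succ).succ) = (starRingEnd ℂ) (w' k.succ.succ) := by
        intro k
        show w' ((((τ' k.succ.succ).pred (hne1 k)).pred
          (predne _ (hne1 k) (hne2 k))).succ).succ = _
        rw [Fin.succ_pred, Fin.succ_pred]
        exact hτ'prop k.succ.succ
      rw [hperm, per_expand]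
      have hexp : (∑ j, (Matrix.of fun a b => (1 - (c a : ℂ) * w' b)⁻¹) j 0 *
            (Matrix.of fun (r c' : Fin (m'+1)) =>
              (Matrix.of fun a b => (1 - (c a : ℂ) * w' b)⁻¹) (Equiv.swap 0 j r.succ) c'.succ).permanent)
          = ∑ j, ∑ j' : Fin (m'+1),
              ((1 - (c j : ℂ) * w' 0)⁻¹ *
                (1 - (c (Equiv.swap 0 j j'.succ) : ℂ) * (starRingEnd ℂ) (w' 0))⁻¹) *
              (Matrix.of fun (r c'' : Fin m') =>
                (1 - (c (Equiv.swap 0 j (Equiv.swap 0 j' r.succ).succ) : ℂ) *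
                  w' c''.succ.succ)⁻¹).permanent := by
        refine Finset.sum_congr rfl (fun j _ => ?_)
        have hm1 : (Matrix.of fun (r c' : Fin (m'+1)) =>
            (Matrix.of fun a b => (1 - (c a : ℂ) * w' b)⁻¹) (Equiv.swap 0 j r.succ) c'.succ)
            = (Matrix.of fun (r c' : Fin (m'+1)) =>
              (1 - (c (Equiv.swap 0 j r.succ) : ℂ) * w' c'.succ)⁻¹) := by
          ext r c'
          simp
        rw [hm1, per_expand, Finset.mul_sum]
        refine Finset.sum_congr rfl (fun j' _ => ?_)
        have hm2 : (Matrix.of fun (r c'' : Fin m') =>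
            (Matrix.of fun (r c' : Fin (m'+1)) =>
              (1 - (c (Equiv.swap 0 j r.succ) : ℂ) * w' c'.succ)⁻¹) (Equiv.swap 0 j' r.succ) c''.succ)
            = (Matrix.of fun (r c'' : Fin m') =>
              (1 - (c (Equiv.swap 0 j (Equiv.swap 0 j' r.succ).succ) : ℂ) *
                w' c''.succ.succ)⁻¹) := by
          ext r c''
          simp
        rw [hm2]
        have hcol : (Matrix.of fun (r c' : Fin (m'+1)) =>
            (1 - (c (Equiv.swap 0 j r.succ) : ℂ) * w' c'.succ)⁻¹) j' 0
            = (1 - (c (Equiv.swap 0 j j'.succ) : ℂ) * (starRingEnd ℂ) (w' 0))⁻¹ := by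
          rw [Matrix.of_apply, Fin.succ_zero_eq_one, hw'1]
        rw [hcol, Matrix.of_apply]
        ring
      rw [hexp, Complex.re_sum]
      refine Finset.sum_pos (fun j _ => ?_) ⟨0, mem_univ 0⟩
      rw [Complex.re_sum]
      refine Finset.sum_pos (fun j' _ => ?_) ⟨0, mem_univ 0⟩
      have hPim : (Matrix.permanent (Matrix.of fun (r c'' : Fin m') =>
          (1 - (c (Equiv.swap 0 j (Equiv.swap 0 j' r.succ).succ) : ℂ) *
            w' c''.succ.succ)⁻¹)).im = 0 :=
        per_real _ (fun k => w' k.succ.succ) τ₃ (fun k => hτ₃prop k)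
      have hPre : 0 < (Matrix.permanent (Matrix.of fun (r c'' : Fin m') =>
          (1 - (c (Equiv.swap 0 j (Equiv.swap 0 j' r.succ).succ) : ℂ) *
            w' c''.succ.succ)⁻¹)).re := by
        refine IH m' (by omega) _ _ (fun r => hc _) (fun k => hw (e k.succ.succ)) ?_ τ₃
          (fun k => hτ₃prop k)
        intro a b hab
        exact Fin.succ_injective _ (Fin.succ_injective _ (e.injective (hwinj hab)))
      rw [Complex.mul_re, hPim, mul_zero, sub_zero]
      refine mul_pos ?_ hPre
      exact coef_pos (c j) (c (Equiv.swap 0 j j'.succ)) (w' 0) (hc j) (hc _) (hw (e 0))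


lemma per_colscale {n : ℕ} (d : Fin n → ℂ) (f : Fin n → Fin n → ℂ) :
    Matrix.permanent (Matrix.of fun j k => d k * f j k)
      = (∏ k, d k) * Matrix.permanent (Matrix.of f) := by
  rw [Matrix.permanent, Matrix.permanent, Finset.mul_sum]
  refine Finset.sum_congr rfl (fun σ _ => ?_)
  rw [← Finset.prod_mul_distrib]
  rfl


end Stmt11


theorem stmt11 (n : ℕ) (hn : 1 ≤ n) (c : Fin n → ℝ) (z : Fin n → ℂ)
    (hc : Function.Injective c) (hcI : ∀ j, c j ∈ Set.Icc (-1 : ℝ) 1)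
    (hz : Function.Injective z)
    (hconj : ∃ σ : Equiv.Perm (Fin n), ∀ k, z (σ k) = (starRingEnd ℂ) (z k))
    (habs : ∀ k, 1 < ‖z k‖) :
    Matrix.det (Matrix.of fun j k => (((c j : ℂ) - z k) ^ 2)⁻¹) ≠ 0 := by
  obtain ⟨σ, hσ⟩ := hconj
  have hcabs : ∀ j, |c j| ≤ 1 := by
    intro j
    obtain ⟨h1, h2⟩ := hcI j
    exact abs_le.mpr ⟨h1, h2⟩
  have hxy : ∀ j k, ((c j : ℝ) : ℂ) ≠ z k := by
    intro j k h
    have : ‖((c j : ℝ) : ℂ)‖ = ‖z k‖ := by rw [h]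
    rw [Complex.norm_real, Real.norm_eq_abs] at this
    have := habs k
    linarith [hcabs j]
  have hz0 : ∀ k, z k ≠ 0 := by
    intro k h
    have := habs k
    rw [h] at this
    simp at this
    linarith
  rw [Stmt11.borchardt n (fun j => ((c j : ℝ) : ℂ)) z hz hxy]
  refine mul_ne_zero ?_ ?_
  · exact Stmt11.cauchy_det_ne_zero _ _
      (fun a b hab => hc (by exact_mod_cast hab)) hz hxy
  · -- permanent of the Cauchy matrix is nonzero
    set w : Fin n → ℂ := fun k => (z k)⁻¹ with hwdef
    have hentry : ∀ j k, (((c j : ℝ) : ℂ) - z k)⁻¹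
        = (-(w k)) * (1 - ((c j : ℝ) : ℂ) * w k)⁻¹ := by
      intro j k
      have h1 : ((1:ℂ) - ((c j : ℝ) : ℂ) * (z k)⁻¹) * z k = z k - ((c j : ℝ) : ℂ) := by
        rw [sub_mul, one_mul, inv_mul_cancel_right₀ (hz0 k)]
      calc (((c j : ℝ) : ℂ) - z k)⁻¹
          = (-(z k - ((c j : ℝ) : ℂ)))⁻¹ := by ring_nf
        _ = -((z k - ((c j : ℝ) : ℂ))⁻¹) := by rw [inv_neg]
        _ = -((((1:ℂ) - ((c j : ℝ) : ℂ) * (z k)⁻¹) * z k)⁻¹) := by rw [h1]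
        _ = (-(w k)) * (1 - ((c j : ℝ) : ℂ) * w k)⁻¹ := by
            rw [mul_inv, hwdef]
            ring
    have hmat : (Matrix.of fun j k => (((c j : ℝ) : ℂ) - z k)⁻¹)
        = (Matrix.of fun j k => (-(w k)) * (1 - ((c j : ℝ) : ℂ) * w k)⁻¹) := by
      ext j k
      simp only [Matrix.of_apply]
      exact hentry j k
    rw [hmat, Stmt11.per_colscale]
    refine mul_ne_zero ?_ ?_
    · refine Finset.prod_ne_zero_iff.mpr (fun k _ => ?_)
      exact neg_ne_zero.mpr (inv_ne_zero (hz0 k))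
    · have hpos := Stmt11.per_pos n c w hcabs
        (fun k => by
          rw [hwdef]
          simp only [norm_inv]
          exact inv_lt_one_of_one_lt₀ (habs k))
        (fun a b hab => hz (inv_injective hab))
        σ
        (fun k => by
          rw [hwdef]
          simp only
          rw [hσ k, ← map_inv₀])
      intro h
      rw [h] at hpos
      simp at hpos
end

section
/- Let n ≥ 4 and a > 1 + 1/n. Define Q_n(a; x) = ∫_a^x T_{n−1}(t) dt. Then Q_n(a; x) < 0 for all x ∈ [−1, 1]. -/
open Polynomial Polynomial.Chebyshev in
lemma two_chebT_eval (m : ℤ) (x : ℝ) :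
    2 * chebT m x = (U ℝ m).eval x - (U ℝ (m - 2)).eval x := by
  have h1 := congrArg (eval x) (U_eq ℝ m)
  have h2 := congrArg (eval x) (T_eq_U_sub_X_mul_U ℝ m)
  simp only [eval_mul, eval_sub, eval_ofNat, eval_X] at h1 h2
  unfold chebT
  linarith

open Polynomial Polynomial.Chebyshev in
lemma chebT_hasDerivAt (m : ℤ) (x : ℝ) :
    HasDerivAt (chebT m) ((m : ℝ) * (U ℝ (m - 1)).eval x) x := by
  have h := Polynomial.hasDerivAt (T ℝ m) x
  rw [T_derivative_eq_U] at h
  exact (by simpa using h : HasDerivAt (fun x => eval x (T ℝ m)) ((m : ℝ) * (U ℝ (m - 1)).eval x) x)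

lemma chebT_abs_le (m : ℤ) (y : ℝ) (hy : y ∈ Set.Icc (-1 : ℝ) 1) : |chebT m y| ≤ 1 := by
  have h1 : Real.cos (Real.arccos y) = y := Real.cos_arccos hy.1 hy.2
  have := Polynomial.Chebyshev.T_real_cos (Real.arccos y) m
  rw [h1] at this
  unfold chebT
  rw [this]
  exact Real.abs_cos_le_one _

lemma chebT_one (m : ℤ) : chebT m 1 = 1 := by
  have := Polynomial.Chebyshev.T_real_cos 0 m
  simp [chebT]

open Polynomial Polynomial.Chebyshev in
lemma chebT_growth (k : ℕ) (t : ℝ) (ht : 1 ≤ t) :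
    1 + (k : ℝ) ^ 2 * (t - 1) ≤ chebT k t ∧
      (2 * (k : ℝ) + 1) * (t - 1) ≤ chebT (k + 1) t - chebT k t := by
  induction k with
  | zero => simp [chebT, T_zero, T_one]
  | succ k ih =>
    obtain ⟨h1, h2⟩ := ih
    have hrec : chebT ((k : ℤ) + 2) t = 2 * t * chebT (k + 1) t - chebT k t := by
      have := congrArg (eval t) (T_add_two ℝ k)
      simpa [chebT, eval_mul] using this
    have h3 : 1 + ((k : ℝ) + 1) ^ 2 * (t - 1) ≤ chebT (k + 1) t := by nlinarith
    have e : ((k : ℤ) + 1 + 1 : ℤ) = (k : ℤ) + 2 := by ring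
    simp only [Nat.cast_add, Nat.cast_one, e, hrec]
    constructor
    · push_cast; nlinarith
    · push_cast
      have ht1 : (0:ℝ) ≤ t - 1 := by linarith
      nlinarith [mul_le_mul_of_nonneg_left h3 ht1, sq_nonneg (((k:ℝ)+1)*(t-1)), mul_nonneg ht1 ht1]


lemma arith_key (N s : ℝ) (hN4 : 4 ≤ N) (h1 : 1 < s * N) :
    1 / (N - 2) < s + (N - 1) ^ 2 * s ^ 2 / 2 := by
  have hN0 : (0:ℝ) < N := by linarith
  have hN2 : (0:ℝ) < N - 2 := by linarith
  have hu2 : 1 < (s * N) ^ 2 := by nlinarith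
  have A : 2 * N * (N - 2) < 2 * N * (N - 2) * (s * N) :=
    (lt_mul_iff_one_lt_right (by positivity)).2 h1
  have B : (N - 1) ^ 2 * (N - 2) < (N - 1) ^ 2 * (N - 2) * (s * N) ^ 2 :=
    (lt_mul_iff_one_lt_right (mul_pos (pow_pos (by linarith) 2) hN2)).2 hu2
  have C : 0 ≤ N ^ 2 * (N - 4) := mul_nonneg (sq_nonneg N) (by linarith)
  have key2 : 2 * N ^ 2 < 2 * N ^ 2 * (N - 2) * s + N ^ 2 * ((N - 1) ^ 2 * (N - 2)) * s ^ 2 := by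
    nlinarith [A, B, C]
  rw [div_lt_iff₀ hN2]
  nlinarith [key2, mul_pos two_pos (pow_pos hN0 2)]

open Polynomial Polynomial.Chebyshev in
theorem stmt12 (n : ℕ) (hn : 4 ≤ n) (a : ℝ) (ha : 1 + 1 / n < a) (x : ℝ)
    (hx : x ∈ Set.Icc (-1 : ℝ) 1) :
    (∫ t in a..x, chebT ((n : ℤ) - 1) t) < 0 := by
  set N : ℝ := (n : ℝ) with hN
  have hN4 : (4 : ℝ) ≤ N := by rw [hN]; exact_mod_cast hn
  have hN0 : (0 : ℝ) < N := by linarith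
  have hNne : N ≠ 0 := hN0.ne'
  have hN2 : (0 : ℝ) < N - 2 := by linarith
  have hN2ne : N - 2 ≠ 0 := hN2.ne'
  set F : ℝ → ℝ := fun y => chebT n y / (2 * N) - chebT ((n : ℤ) - 2) y / (2 * (N - 2))
    with hF
  have hder : ∀ y : ℝ, HasDerivAt F (chebT ((n : ℤ) - 1) y) y := by
    intro y
    have d1 := (chebT_hasDerivAt (n : ℤ) y).div_const (2 * N)
    have d2 := (chebT_hasDerivAt ((n : ℤ) - 2) y).div_const (2 * (N - 2))
    have hsub := d1.sub d2
    refine hsub.congr_deriv ?_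
    have h2T := two_chebT_eval ((n : ℤ) - 1) y
    have e1 : ((n : ℤ) - 1 - 2 : ℤ) = (n : ℤ) - 2 - 1 := by ring
    rw [e1] at h2T
    have c1 : (((n : ℤ) : ℝ)) = N := by rw [hN]; push_cast; ring
    have c2 : (((n : ℤ) - 2 : ℤ) : ℝ) = N - 2 := by rw [hN]; push_cast; ring
    rw [c1, c2]
    have e3 : ∀ u : ℝ, N * u / (2 * N) = u / 2 := fun u => by field_simp
    have e4 : ∀ u : ℝ, (N - 2) * u / (2 * (N - 2)) = u / 2 := fun u => by field_simp
    rw [e3, e4]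
    linarith [h2T]
  have hcont : ∀ m : ℤ, Continuous (chebT m) := fun m => by
    unfold chebT; exact Polynomial.continuous _
  have hFTC : ∀ u v : ℝ, (∫ t in u..v, chebT ((n : ℤ) - 1) t) = F v - F u := fun u v =>
    intervalIntegral.integral_eq_sub_of_hasDerivAt (fun t _ => hder t)
      ((hcont _).intervalIntegrable u v)
  rw [hFTC a x]
  -- upper bound for F x
  have hb1 := abs_le.1 (chebT_abs_le (n : ℤ) x hx)
  have hb2 := abs_le.1 (chebT_abs_le ((n : ℤ) - 2) x hx)
  have hFx : F x ≤ 1 / (2 * N) + 1 / (2 * (N - 2)) := by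
    rw [hF]
    have g1 : chebT (n : ℤ) x / (2 * N) ≤ 1 / (2 * N) := by gcongr ?_ / _; exact hb1.2
    have g2 : (-1 : ℝ) / (2 * (N - 2)) ≤ chebT ((n : ℤ) - 2) x / (2 * (N - 2)) := by
      gcongr ?_ / _; exact hb2.1
    have e5 : (-1 : ℝ) / (2 * (N - 2)) = -(1 / (2 * (N - 2))) := neg_div _ _
    rw [e5] at g2
    simp only
    linarith
  -- lower bound for F a
  have h1a : (1 : ℝ) ≤ a := by
    have : 0 < 1 / N := by positivity
    rw [hN] at *
    linarith
  have hgrow : ∀ t ∈ Set.Icc (1:ℝ) a,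
      1 + (N - 1) ^ 2 * (t - 1) ≤ chebT ((n : ℤ) - 1) t := by
    intro t ht
    have h := (chebT_growth (n - 1) t ht.1).1
    have e : (((n - 1 : ℕ) : ℤ)) = (n : ℤ) - 1 := by omega
    have e2 : ((n - 1 : ℕ) : ℝ) = N - 1 := by
      rw [hN]
      have h1n : (1:ℕ) ≤ n := by omega
      push_cast [h1n]; ring
    rw [e, e2] at h
    exact h
  set c : ℝ := (N - 1) ^ 2 with hc
  set G : ℝ → ℝ := fun t => (t - 1) + c * (t - 1) ^ 2 / 2 with hG
  have hGder : ∀ t : ℝ, HasDerivAt G (1 + c * (t - 1)) t := by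
    intro t
    have h1 : HasDerivAt (fun t : ℝ => t - 1) 1 t := (hasDerivAt_id t).sub_const 1
    have h2 : HasDerivAt (fun t : ℝ => c * (t - 1) ^ 2 / 2) (c * (t - 1)) t := by
      have h3 := ((h1.pow 2).const_mul c).div_const 2
      refine h3.congr_deriv ?_
      simp
      ring
    exact h1.add h2
  have hcomp : (∫ t in (1:ℝ)..a, (1 + c * (t - 1))) = G a - G 1 :=
    intervalIntegral.integral_eq_sub_of_hasDerivAt (fun t _ => hGder t)
      ((by continuity : Continuous fun t : ℝ => 1 + c * (t - 1)).intervalIntegrable 1 a)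
  have hmono : (∫ t in (1:ℝ)..a, (1 + c * (t - 1))) ≤ ∫ t in (1:ℝ)..a, chebT ((n:ℤ)-1) t := by
    apply intervalIntegral.integral_mono_on h1a
      ((by continuity : Continuous fun t : ℝ => 1 + c * (t - 1)).intervalIntegrable 1 a)
      ((hcont _).intervalIntegrable 1 a)
    exact hgrow
  have hFa : F 1 + (G a - G 1) ≤ F a := by
    have h6 := hFTC 1 a
    linarith [hmono, hcomp]
  have hF1 : F 1 = 1 / (2 * N) - 1 / (2 * (N - 2)) := by
    rw [hF]; simp [chebT_one]
  have hG1 : G 1 = 0 := by rw [hG]; simp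
  have hGa : G a = (a - 1) + c * (a - 1) ^ 2 / 2 := rfl
  -- final arithmetic
  have hsn : 1 / N < a - 1 := by rw [hN] at *; linarith
  have h1 : 1 < (a - 1) * N := (div_lt_iff₀ hN0).1 hsn
  have key := arith_key N (a - 1) hN4 h1
  have hhalf : 1 / (2 * (N - 2)) + 1 / (2 * (N - 2)) = 1 / (N - 2) := by
    rw [← add_div]
    rw [show (2:ℝ) * (N-2) = (N-2) * 2 by ring]
    rw [← div_div]
    ring
  rw [hG1, hGa, hF1] at hFa
  rw [← hc] at key
  have hlt : F x < F a := by
    calc F x ≤ 1 / (2 * N) + 1 / (2 * (N - 2)) := hFx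
    _ < 1 / (2 * N) - 1 / (2 * (N - 2)) + ((a - 1) + c * (a - 1) ^ 2 / 2) := by
        linarith
    _ ≤ F a := by linarith
  linarith
end

section
/- Let n ≥ 4 and a > (3√n)^{1/n}. Then f(a) := T_n(a)/n − T_{n−2}(a)/(n−2) > (a + √(a²−1))^n / (3·n^{3/2}). -/
lemma cheb_bc (b c : ℝ) (h : b * c = 1) :
    ∀ k : ℕ, chebT k ((b + c)/2) = (b^k + c^k)/2 ∧
      chebT (k+1) ((b + c)/2) = (b^(k+1) + c^(k+1))/2 := by
  intro k
  induction k with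
  | zero => constructor
            · simp [chebT, Polynomial.Chebyshev.T_zero]
            · simp [chebT, Polynomial.Chebyshev.T_one]
  | succ k ih =>
    refine ⟨ih.2, ?_⟩
    have h2 : chebT ((k:ℤ)+2) ((b+c)/2)
        = 2 * ((b+c)/2) * chebT (k+1) ((b+c)/2) - chebT k ((b+c)/2) := by
      have := Polynomial.Chebyshev.T_add_two ℝ (k : ℤ)
      simp only [chebT, this]
      simp [Polynomial.eval_mul, Polynomial.eval_sub]
    have h3 : ((k+1:ℕ):ℤ) + 1 = (k:ℤ) + 2 := by push_cast; ring
    rw [h3, h2, ih.1, ih.2]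
    have hb : b^(k+1+1) + c^(k+1+1)
        = (b+c) * (b^(k+1)+c^(k+1)) - (b*c) * (b^k + c^k) := by ring
    rw [hb, h]
    ring

lemma claim_poly (u s β : ℝ) (hu : 2 ≤ u) (hs : 0 < s) (hsu : 1.84 < s * u)
    (hβ : 1 + 2*s + 2*s^2 ≤ β) :
    3*u^3 + u^2 < β * (u^2 - 2) * (3*u - 2) := by
  nlinarith [mul_pos hs (mul_pos hs (by linarith : (0:ℝ) < u)),
    mul_nonneg (mul_nonneg hs.le (by linarith : (0:ℝ) ≤ u - 2)) (by linarith : (0:ℝ) ≤ u),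
    mul_nonneg (by nlinarith : (0:ℝ) ≤ s*u - 1.84) (by linarith : (0:ℝ) ≤ u - 2),
    mul_nonneg (mul_nonneg (by nlinarith : (0:ℝ) ≤ s*u - 1.84) (by linarith : (0:ℝ) ≤ u - 2)) (by linarith : (0:ℝ) ≤ u),
    mul_nonneg (mul_nonneg (by nlinarith : (0:ℝ) ≤ s*u - 1.84) (by nlinarith : (0:ℝ) ≤ s*u - 1.84)) (by linarith : (0:ℝ) ≤ u),
    mul_nonneg (mul_nonneg (by nlinarith : (0:ℝ) ≤ s*u - 1.84) (by nlinarith : (0:ℝ) ≤ s*u)) (by linarith : (0:ℝ) ≤ u - 2),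
    sq_nonneg (u - 2), sq_nonneg (s*u - 1.84)]

lemma pow32 (u : ℝ) (hu : 0 ≤ u) : (u^2)^((3:ℝ)/2) = u^3 := by
  rw [← Real.rpow_natCast u 2, ← Real.rpow_mul hu]
  norm_num

lemma final_ineq (m u β X Y Z W : ℝ) (hu2 : 2 ≤ u) (hm : m = u^2)
    (hβ0 : 0 < β) (hX0 : 0 < X) (hY0 : 0 < Y) (hZ0 : 0 < Z) (hW0 : 0 < W)
    (hXZ : X*Z = 1) (hYW : Y*W = 1) (hYX : Y*β = X) (hX3u : 3*u < X) (hXβ2 : β^2 ≤ X)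
    (hQc : 3*u^3 + u^2 < β*(u^2-2)*(3*u-2)) :
    X/(3*u^3) < (X+Z)/2/m - (Y+W)/2/(m-2) := by
  have hu0 : (0:ℝ) < u := by linarith
  have hm4 : (4:ℝ) ≤ m := by nlinarith
  have hm0 : (0:ℝ) < m := by linarith
  have hm2 : (0:ℝ) < m - 2 := by linarith
  have hQ : u^2 < (u^2-2)*β*(3*u-2) - 3*u^3 := by nlinarith
  have hX2 : 3*u*β^2 < X^2 := by
    nlinarith [mul_pos (by linarith : (0:ℝ) < X - 3*u) hX0,
      mul_nonneg (by linarith : (0:ℝ) ≤ 3*u) (by linarith : (0:ℝ) ≤ X - β^2)]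
  have hT' : 0 < 3*(m-2)*u^3*β*(X^2+1) - 3*m*u^3*(X^2+β^2) - 2*m*(m-2)*β*X^2 := by
    rw [hm]
    have h1 : X^2*(u^2)*(u^2) ≤ X^2*((u^2-2)*β*(3*u-2) - 3*u^3)*(u^2) :=
      mul_le_mul_of_nonneg_right (mul_le_mul_of_nonneg_left hQ.le (sq_nonneg X)) (sq_nonneg u)
    have h2 : 3*u*β^2*u^4 < X^2*u^4 :=
      mul_lt_mul_of_pos_right hX2 (by positivity)
    have h3 : (0:ℝ) ≤ 3*u^3*(u^2-2)*β := by
      have h4 : (0:ℝ) ≤ u^2 - 2 := by nlinarith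
      positivity
    nlinarith [h1, h2, h3]
  have hTmul : (3*(m-2)*u^3*(X+Z) - 3*m*u^3*(Y+W) - 2*m*(m-2)*X) * (X*β)
      = 3*(m-2)*u^3*β*(X^2+1) - 3*m*u^3*(X^2+β^2) - 2*m*(m-2)*β*X^2 := by
    linear_combination (3*(m-2)*u^3*β) * hXZ + (-3*m*u^3*X + 3*m*u^3*W*β) * hYX
      + (-3*m*u^3*β^2) * hYW
  have hT : 0 < 3*(m-2)*u^3*(X+Z) - 3*m*u^3*(Y+W) - 2*m*(m-2)*X := by
    nlinarith [hT', hTmul, mul_pos hX0 hβ0]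
  have hkey : (X+Z)/2/m - (Y+W)/2/(m-2) - X/(3*u^3)
      = (3*(m-2)*u^3*(X+Z) - 3*m*u^3*(Y+W) - 2*m*(m-2)*X) / (6*m*(m-2)*u^3) := by
    field_simp
    ring
  have hdiv : 0 < (3*(m-2)*u^3*(X+Z) - 3*m*u^3*(Y+W) - 2*m*(m-2)*X) / (6*m*(m-2)*u^3) :=
    div_pos hT (by positivity)
  linarith [hkey ▸ hdiv]

set_option maxHeartbeats 1000000 in
theorem stmt15 (n : ℕ) (hn : 4 ≤ n) (a : ℝ)
    (ha : (3 * Real.sqrt n) ^ ((1 : ℝ) / n) < a) :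
    (a + Real.sqrt (a ^ 2 - 1)) ^ n / (3 * (n : ℝ) ^ ((3 : ℝ) / 2))
      < chebT n a / n - chebT ((n : ℤ) - 2) a / (n - 2) := by
  have hn0 : (0:ℝ) < n := by positivity
  have hnn : (4:ℝ) ≤ (n:ℝ) := by exact_mod_cast hn
  obtain ⟨u, hu_def⟩ : ∃ u : ℝ, u = Real.sqrt n := ⟨_, rfl⟩
  rw [← hu_def] at ha
  have hu0 : 0 < u := hu_def ▸ Real.sqrt_pos.mpr hn0
  have hnu : (n:ℝ) = u^2 := by rw [hu_def]; exact (Real.sq_sqrt hn0.le).symm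
  have hu2 : 2 ≤ u := by nlinarith
  -- log bound
  have hlog6 : (1.6931:ℝ) ≤ Real.log 6 := by
    have h2 : (0.6931471803:ℝ) < Real.log 2 := Real.log_two_gt_d9
    have h3 : (1:ℝ) ≤ Real.log 3 := by
      rw [Real.le_log_iff_exp_le (by norm_num)]
      calc Real.exp 1 ≤ 2.7182818286 := Real.exp_one_lt_d9.le
        _ ≤ 3 := by norm_num
    have h6 : Real.log 6 = Real.log 2 + Real.log 3 := by
      rw [← Real.log_mul (by norm_num) (by norm_num)]; norm_num
    linarith
  have hL : (1.6931:ℝ) ≤ Real.log (3*u) := by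
    have h6 : (6:ℝ) ≤ 3*u := by linarith
    have := Real.log_le_log (by norm_num : (0:ℝ) < 6) h6
    linarith
  have hrw : (3*u) ^ ((1:ℝ)/n) = Real.exp (Real.log (3*u) * (1/n)) :=
    Real.rpow_def_of_pos (by positivity) _
  have hea : Real.exp (Real.log (3*u) * (1/n)) < a := by rw [← hrw]; exact ha
  have h1a : 1 < a := by
    have ht : 0 < Real.log (3*u) * (1/n) := by positivity
    nlinarith [Real.add_one_le_exp (Real.log (3*u) * (1/n))]
  have ha0 : 0 < a := by linarith
  have ha2 : Real.exp (2 * (Real.log (3*u) * (1/n))) < a^2 := by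
    have h := Real.exp_pos (Real.log (3*u) * (1/n))
    have he : Real.exp (2 * (Real.log (3*u) * (1/n)))
        = Real.exp (Real.log (3*u) * (1/n)) * Real.exp (Real.log (3*u) * (1/n)) := by
      rw [← Real.exp_add]; ring_nf
    rw [he]
    nlinarith
  have hs2n : 3.3862 / n < a^2 - 1 := by
    have h1 := Real.add_one_le_exp (2 * (Real.log (3*u) * (1/n)))
    have h2 : 3.3862 / (n:ℝ) ≤ 2 * (Real.log (3*u) * (1/n)) := by
      rw [div_le_iff₀ hn0]
      have he : 2 * (Real.log (3*u) * (1/n)) * n = 2 * Real.log (3*u) := by field_simp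
      rw [he]; linarith
    linarith
  have ha21 : (0:ℝ) < a^2 - 1 := by
    have : (0:ℝ) < 3.3862 / n := by positivity
    linarith
  obtain ⟨s, hs_def⟩ : ∃ s : ℝ, s = Real.sqrt (a^2 - 1) := ⟨_, rfl⟩
  have hs2 : s^2 = a^2 - 1 := by rw [hs_def]; exact Real.sq_sqrt ha21.le
  have hs : 0 < s := hs_def ▸ Real.sqrt_pos.mpr ha21
  have hsu : 1.84 < s * u := by
    have h1 : (s*u)^2 = (a^2-1) * n := by rw [mul_pow, hs2, hnu]
    have h2 : (3.3862:ℝ) < (a^2-1) * n := (div_lt_iff₀ hn0).mp hs2n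
    nlinarith [mul_pos hs hu0]
  have hbc : (a+s) * (a-s) = 1 := by linear_combination -hs2
  have hb1 : 1 < a + s := by linarith
  have hb0 : (0:ℝ) < a + s := by linarith
  have hc0 : (0:ℝ) < a - s := by nlinarith
  have hβlb : 1 + 2*s + 2*s^2 ≤ (a+s)^2 := by nlinarith [hs2]
  have hβ0 : (0:ℝ) < (a+s)^2 := by positivity
  have hX0 : (0:ℝ) < (a+s)^n := by positivity
  have hZ0 : (0:ℝ) < (a-s)^n := by positivity
  have hY0 : (0:ℝ) < (a+s)^(n-2) := by positivity
  have hW0 : (0:ℝ) < (a-s)^(n-2) := by positivity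
  have hXZ : (a+s)^n * (a-s)^n = 1 := by rw [← mul_pow, hbc, one_pow]
  have hYW : (a+s)^(n-2) * (a-s)^(n-2) = 1 := by rw [← mul_pow, hbc, one_pow]
  have hYX : (a+s)^(n-2) * (a+s)^2 = (a+s)^n := by
    rw [← pow_add]; congr 1; omega
  have hXa : 3*u < a^n := by
    have hbase : (0:ℝ) ≤ (3*u)^((1:ℝ)/n) := Real.rpow_nonneg (by positivity) _
    have hpow : ((3*u)^((1:ℝ)/n))^n = 3*u := by
      rw [← Real.rpow_natCast ((3*u)^((1:ℝ)/n)) n, ← Real.rpow_mul (by positivity : (0:ℝ) ≤ 3*u)]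
      rw [show (1:ℝ)/n * n = 1 by field_simp, Real.rpow_one]
    calc 3*u = ((3*u)^((1:ℝ)/n))^n := hpow.symm
      _ < a^n := pow_lt_pow_left₀ ha hbase (by omega)
  have hX3u : 3*u < (a+s)^n := by
    have : a^n ≤ (a+s)^n := pow_le_pow_left₀ ha0.le (by linarith) n
    linarith
  have hXβ2 : ((a+s)^2)^2 ≤ (a+s)^n := by
    have h4 : (a+s)^4 ≤ (a+s)^n := pow_le_pow_right₀ hb1.le hn
    calc ((a+s)^2)^2 = (a+s)^4 := by ring
      _ ≤ (a+s)^n := h4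
  have hQc := claim_poly u s ((a+s)^2) hu2 hs hsu hβlb
  have hch1 : chebT n a = ((a+s)^n + (a-s)^n)/2 := by
    have h := (cheb_bc (a+s) (a-s) hbc n).1
    rwa [show ((a+s)+(a-s))/2 = a by ring] at h
  have hch2 : chebT ((n:ℤ) - 2) a = ((a+s)^(n-2) + (a-s)^(n-2))/2 := by
    have hidx : ((n:ℤ) - 2) = ((n-2 : ℕ) : ℤ) := by omega
    have h := (cheb_bc (a+s) (a-s) hbc (n-2)).1
    rw [hidx]
    rwa [show ((a+s)+(a-s))/2 = a by ring] at h
  have hpow32 : (n:ℝ)^((3:ℝ)/2) = u^3 := by rw [hnu]; exact pow32 u hu0.le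
  have main := final_ineq (n:ℝ) u ((a+s)^2) ((a+s)^n) ((a+s)^(n-2)) ((a-s)^n)
    ((a-s)^(n-2)) hu2 hnu hβ0 hX0 hY0 hZ0 hW0 hXZ hYW hYX hX3u hXβ2 hQc
  rw [show Real.sqrt (a^2 - 1) = s from hs_def.symm, hch1, hch2, hpow32]
  convert main using 2
end

section
/- All roots of the polynomial f(x) = T_n(x)/n − T_{n−2}(x)/(n−2) are real and belong to the interval [−1 − 1/n, 1 + 1/n], for every integer n ≥ 4. -/
open Polynomial Polynomial.Chebyshev

namespace Stmt17Aux


lemma Tcongr {a b : ℤ} (h : a = b) : T ℝ a = T ℝ b := by rw [h]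

lemma eval_T_add_two (y : ℝ) (m : ℤ) :
    (T ℝ (m+2)).eval y = 2*y*(T ℝ (m+1)).eval y - (T ℝ m).eval y := by
  rw [T_add_two]; simp

lemma ratio1 (y : ℝ) (hy : 1 ≤ y) :
    ∀ m : ℕ, 0 < (T ℝ m).eval y ∧ y * (T ℝ m).eval y ≤ (T ℝ (m+1)).eval y := by
  intro m
  induction m with
  | zero => norm_num
  | succ k ih =>
    obtain ⟨h1, h2⟩ := ih
    have hpos : 0 < (T ℝ ((k:ℤ)+1)).eval y := lt_of_lt_of_le (by nlinarith) h2
    have hrec := eval_T_add_two y k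
    have e2 : T ℝ ((k:ℤ)+1+1) = T ℝ ((k:ℤ)+2) := Tcongr (by ring)
    constructor
    · push_cast; exact hpos
    · push_cast
      rw [e2, hrec]
      have hk : (T ℝ (k:ℤ)).eval y ≤ (T ℝ ((k:ℤ)+1)).eval y := le_trans (by nlinarith) h2
      nlinarith

lemma ratio2 (y : ℝ) (hy : 1 ≤ y) (m : ℕ) :
    (2*y - 1/y) * (T ℝ ((m:ℤ)+1)).eval y ≤ (T ℝ ((m:ℤ)+2)).eval y := by
  have hy0 : 0 < y := by linarith
  obtain ⟨h1, h2⟩ := ratio1 y hy m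
  have hrec := eval_T_add_two y m
  have h4 : (1/y) * (y * (T ℝ (m:ℤ)).eval y) ≤ (1/y) * (T ℝ ((m:ℤ)+1)).eval y :=
    mul_le_mul_of_nonneg_left h2 (by positivity)
  have h5 : (1/y) * (y * (T ℝ (m:ℤ)).eval y) = (T ℝ (m:ℤ)).eval y := by field_simp
  rw [h5] at h4
  nlinarith

lemma parity (y : ℝ) :
    ∀ m : ℕ, (T ℝ m).eval (-y) = (-1)^m * (T ℝ m).eval y := by
  have key : ∀ m : ℕ, (T ℝ m).eval (-y) = (-1)^m * (T ℝ m).eval y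
      ∧ (T ℝ ((m:ℤ)+1)).eval (-y) = (-1)^(m+1) * (T ℝ ((m:ℤ)+1)).eval y := by
    intro m
    induction m with
    | zero => norm_num
    | succ k ih =>
      obtain ⟨h1, h2⟩ := ih
      have e2 : T ℝ ((k:ℤ)+1+1) = T ℝ ((k:ℤ)+2) := Tcongr (by ring)
      have hrec1 := eval_T_add_two y k
      have hrec2 := eval_T_add_two (-y) k
      constructor
      · push_cast; exact h2
      · push_cast
        rw [e2, hrec1, hrec2, h1, h2]
        ring
  intro m; exact (key m).1

lemma degT : ∀ m : ℕ, (T ℝ m).natDegree ≤ m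
      ∧ (T ℝ ((m:ℤ)+1)).natDegree ≤ m+1 ∧ (T ℝ ((m:ℤ)+1)).coeff (m+1) = 2^m := by
  intro m
  induction m with
  | zero => refine ⟨by simp, by simp, by simp⟩
  | succ k ih =>
    obtain ⟨h1, h2, h3⟩ := ih
    have hrec : T ℝ ((k:ℤ)+2) = 2*X*T ℝ ((k:ℤ)+1) - T ℝ (k:ℤ) := T_add_two ℝ k
    have e2 : T ℝ ((k:ℤ)+1+1) = T ℝ ((k:ℤ)+2) := Tcongr (by ring)
    have h2X : (2*X : ℝ[X]) = Polynomial.C 2 * X := by rw [show ((2:ℝ[X])) = Polynomial.C 2 from (map_ofNat Polynomial.C 2).symm]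
    constructor
    · push_cast; exact h2
    constructor
    · push_cast
      rw [e2, hrec]
      refine le_trans (natDegree_sub_le _ _) ?_
      simp only [max_le_iff]
      constructor
      · refine le_trans (natDegree_mul_le) ?_
        have : (2*X : ℝ[X]).natDegree ≤ 1 := by
          rw [h2X]; exact (natDegree_C_mul_le _ _).trans natDegree_X.le
        omega
      · omega
    · push_cast
      rw [e2, hrec]
      rw [coeff_sub, h2X, mul_assoc, coeff_C_mul, coeff_X_mul]
      have hz : (T ℝ (k:ℤ)).coeff (k+2) = 0 :=
        coeff_eq_zero_of_natDegree_lt (by omega)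
      rw [h3, hz]
      ring



noncomputable def Qa (n : ℕ) : ℝ[X] :=
  C ((n:ℝ)-2) * T ℝ (n:ℤ) - C (n:ℝ) * T ℝ ((n:ℤ)-2)

noncomputable def ea (n k : ℕ) : ℝ :=
  if k = 0 then -(1+1/(n:ℝ)) else if k = n then 1+1/(n:ℝ)
  else Real.cos ((2*((n:ℝ)-1-(k:ℝ))+1)*Real.pi/(2*((n:ℝ)-1)))

-- new material
lemma Qdeg (n : ℕ) (hn : 4 ≤ n) : (Qa n).natDegree = n ∧ Qa n ≠ 0 := by
  have hN : (4:ℝ) ≤ (n:ℝ) := by exact_mod_cast hn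
  have hT2 : T ℝ ((n:ℤ)-2) = T ℝ ((n-2 : ℕ) : ℤ) := Tcongr (by omega)
  have hTn : T ℝ ((n:ℤ)) = T ℝ (((n-1 : ℕ) : ℤ)+1) := Tcongr (by omega)
  have hcoeffn : (T ℝ ((n:ℤ))).coeff n = 2^(n-1) := by
    rw [hTn]
    have := (degT (n-1)).2.2
    rwa [show (n-1)+1 = n by omega] at this
  have hz : (T ℝ ((n:ℤ)-2)).coeff n = 0 := by
    rw [hT2]
    exact coeff_eq_zero_of_natDegree_lt (lt_of_le_of_lt (degT (n-2)).1 (by omega))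
  have hQcoeff : (Qa n).coeff n = ((n:ℝ)-2) * 2^(n-1) := by
    rw [Qa, coeff_sub, coeff_C_mul, coeff_C_mul, hcoeffn, hz]
    ring
  have hne : (Qa n).coeff n ≠ 0 := by
    rw [hQcoeff]
    have h2 : (0:ℝ) < (n:ℝ)-2 := by linarith
    exact ne_of_gt (mul_pos h2 (by positivity))
  have hle : (Qa n).natDegree ≤ n := by
    rw [Qa]
    refine le_trans (natDegree_sub_le _ _) ?_
    simp only [max_le_iff]
    constructor
    · refine le_trans (natDegree_C_mul_le _ _) ?_
      rw [hTn]
      exact le_trans (degT (n-1)).2.1 (by omega)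
    · refine le_trans (natDegree_C_mul_le _ _) ?_
      rw [hT2]
      exact le_trans (degT (n-2)).1 (by omega)
  exact ⟨le_antisymm hle (le_natDegree_of_ne_zero hne), fun h => hne (by rw [h]; simp)⟩

lemma Qpos (n : ℕ) (hn : 4 ≤ n) : 0 < (Qa n).eval (1+1/(n:ℝ)) := by
  have hN : (4:ℝ) ≤ (n:ℝ) := by exact_mod_cast hn
  set N : ℝ := (n:ℝ) with hNdef
  clear_value N
  have hN0 : 0 < N := by linarith
  set y : ℝ := 1 + 1/N with hy
  clear_value y
  have hy1 : 1 ≤ y := by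
    have : 0 < 1/N := by positivity
    simp [hy]; positivity
  have hy0 : 0 < y := by linarith
  set c : ℝ := 2*y - 1/y with hc
  clear_value c
  have hcval : c = (N^2+4*N+2)/(N^2+N) := by
    rw [hc, hy]; field_simp; ring
  have hc0 : 1 ≤ c := by
    have h1y : 1/y ≤ 1 := by rw [div_le_one hy0]; linarith
    have : 2 ≤ 2*y := by linarith
    linarith
  -- T index manipulations
  have e1 : T ℝ ((↑(n-3):ℤ)+1) = T ℝ ((↑(n-2):ℤ)) := Tcongr (by omega)
  have e2 : T ℝ ((↑(n-3):ℤ)+2) = T ℝ ((↑(n-1):ℤ)) := Tcongr (by omega)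
  have e3 : T ℝ ((↑(n-2):ℤ)+1) = T ℝ ((↑(n-1):ℤ)) := Tcongr (by omega)
  have e4 : T ℝ ((↑(n-2):ℤ)+2) = T ℝ ((↑n:ℤ)) := Tcongr (by omega)
  have r1 := ratio2 y hy1 (n-3)
  have r2 := ratio2 y hy1 (n-2)
  rw [e1, e2, ← hc] at r1
  rw [e3, e4, ← hc] at r2
  have tpos := (ratio1 y hy1 (n-2)).1
  have tpos1 : 0 < (T ℝ ((↑(n-1):ℤ))).eval y := by
    have := mul_pos (lt_of_lt_of_le zero_lt_one hc0) tpos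
    linarith
  have hchain : c * (c * (T ℝ ((↑(n-2):ℤ))).eval y) ≤ (T ℝ ((↑n:ℤ))).eval y := by
    have h1 : c * (c * (T ℝ ((↑(n-2):ℤ))).eval y) ≤ c * (T ℝ ((↑(n-1):ℤ))).eval y :=
      mul_le_mul_of_nonneg_left r1 (by linarith)
    linarith
  have hkey : N * (T ℝ ((↑(n-2):ℤ))).eval y < (N-2) * (T ℝ ((↑n:ℤ))).eval y := by
    have hineq : N < (N-2) * (c*c) := by
      have hden : (0:ℝ) < (N^2+N)*(N^2+N) := by nlinarith
      rw [hcval, div_mul_div_comm, ← mul_div_assoc, lt_div_iff₀ hden]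
      nlinarith [sq_nonneg (N-4), sq_nonneg N]
    nlinarith [hchain, tpos]
  have hT2 : T ℝ ((n:ℤ)-2) = T ℝ ((n-2 : ℕ) : ℤ) := Tcongr (by omega)
  rw [Qa, eval_sub, eval_mul, eval_mul, eval_C, eval_C, hT2, ← hNdef]
  linarith

lemma sign0 (n : ℕ) (hn : 4 ≤ n) :
    0 < (-1:ℝ)^n * (Qa n).eval (ea n 0) := by
  have hT2 : T ℝ ((n:ℤ)-2) = T ℝ ((n-2 : ℕ) : ℤ) := Tcongr (by omega)
  have hpar : (Qa n).eval (-(1+1/(n:ℝ))) = (-1)^n * (Qa n).eval (1+1/(n:ℝ)) := by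
    rw [Qa, hT2]
    simp only [eval_sub, eval_mul, eval_C]
    rw [parity _ n, parity _ (n-2)]
    have hpow : (-1:ℝ)^(n-2) = (-1)^n := by
      rw [show n = (n-2)+2 by omega, pow_add]
      norm_num
    rw [hpow]
    ring
  have h0 : ea n 0 = -(1+1/(n:ℝ)) := by rw [ea]; simp
  rw [h0, hpar, ← mul_assoc, ← pow_add]
  have : (-1:ℝ)^(n+n) = 1 := Even.neg_one_pow ⟨n, rfl⟩
  rw [this, one_mul]
  exact Qpos n hn

lemma signn (n : ℕ) (hn : 4 ≤ n) :
    0 < (-1:ℝ)^(n-n) * (Qa n).eval (ea n n) := by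
  have hn0 : n ≠ 0 := by omega
  have h0 : ea n n = 1+1/(n:ℝ) := by rw [ea]; simp [hn0]
  simp only [Nat.sub_self, pow_zero, one_mul, h0]
  exact Qpos n hn

lemma signmid (n k : ℕ) (hn : 4 ≤ n) (hk1 : 1 ≤ k) (hk2 : k ≤ n - 1) :
    0 < (-1:ℝ)^(n-k) * (Qa n).eval (ea n k) := by
  have hN : (4:ℝ) ≤ (n:ℝ) := by exact_mod_cast hn
  set m : ℕ := n - 1 - k with hm
  have hMn : m + k + 1 = n := by omega
  have hM : ((n:ℝ) - 1 - (k:ℝ)) = (m:ℝ) := by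
    have : ((m:ℝ) + k + 1) = (n:ℝ) := by exact_mod_cast congrArg (Nat.cast : ℕ → ℝ) hMn
    linarith
  set θ : ℝ := (2*(m:ℝ)+1)*Real.pi/(2*((n:ℝ)-1)) with hθ
  have hea : ea n k = Real.cos θ := by
    rw [ea, if_neg (by omega), if_neg (by omega), hM]
  have hn1 : (0:ℝ) < (n:ℝ)-1 := by linarith
  have hpi := Real.pi_pos
  have hθpos : 0 < θ := by
    rw [hθ]; positivity
  have hmn2 : (m:ℝ) ≤ (n:ℝ) - 2 := by
    have : (m:ℕ) ≤ n - 2 := by omega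
    have h2 : ((m:ℝ)) ≤ ((n-2:ℕ):ℝ) := by exact_mod_cast this
    have h3 : ((n-2:ℕ):ℝ) = (n:ℝ)-2 := by
      have : ((n-2:ℕ) + 2 : ℕ) = n := by omega
      have := congrArg (Nat.cast : ℕ → ℝ) this
      push_cast at this
      linarith
    linarith
  have hθlt : θ < Real.pi := by
    rw [hθ, div_lt_iff₀ (by positivity)]
    nlinarith
  have hsin := Real.sin_pos_of_pos_of_lt_pi hθpos hθlt
  have hphi : ((n:ℝ)-1)*θ = (m:ℝ)*Real.pi + Real.pi/2 := by
    rw [hθ]; field_simp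
  have hcosA : Real.cos ((m:ℝ)*Real.pi + Real.pi/2) = 0 := by
    rw [Real.cos_add_pi_div_two, Real.sin_nat_mul_pi, neg_zero]
  have hsinA : Real.sin ((m:ℝ)*Real.pi + Real.pi/2) = (-1)^m := by
    rw [Real.sin_add_pi_div_two]
    have := Real.cos_nat_mul_pi_sub 0 m
    simpa using this
  have hT2 : T ℝ ((n:ℤ)-2) = T ℝ ((n-2 : ℕ) : ℤ) := Tcongr (by omega)
  have hcast : ((n-2:ℕ):ℝ) = (n:ℝ)-2 := by
    have : ((n-2:ℕ) + 2 : ℕ) = n := by omega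
    have := congrArg (Nat.cast : ℕ → ℝ) this
    push_cast at this
    linarith
  have heval : (Qa n).eval (ea n k) = -(2*(n:ℝ)-2) * ((-1)^m * Real.sin θ) := by
    rw [hea, Qa, hT2, eval_sub, eval_mul, eval_mul, eval_C, eval_C,
      T_real_cos, T_real_cos]
    push_cast
    rw [hcast]  -- might be no-op
    have hNθ : (n:ℝ)*θ = ((m:ℝ)*Real.pi + Real.pi/2) + θ := by rw [← hphi]; ring
    have hN2θ : ((n:ℝ)-2)*θ = ((m:ℝ)*Real.pi + Real.pi/2) - θ := by rw [← hphi]; ring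
    rw [hNθ, hN2θ, Real.cos_add, Real.cos_sub, hcosA, hsinA]
    ring
  have hnk : n - k = m + 1 := by omega
  rw [hnk, heval]
  have hsq : (-1:ℝ)^m * (-1)^m = 1 := by
    rw [← pow_add]; exact Even.neg_one_pow ⟨m, rfl⟩
  have hrw : (-1:ℝ)^(m+1) * (-(2*(n:ℝ)-2) * ((-1)^m * Real.sin θ))
      = (2*(n:ℝ)-2) * Real.sin θ * ((-1:ℝ)^m * (-1)^m) := by
    rw [pow_succ]; ring
  rw [hrw, hsq, mul_one]
  have h2 : (0:ℝ) < 2*(n:ℝ)-2 := by linarith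
  exact mul_pos h2 hsin

lemma signs (n : ℕ) (hn : 4 ≤ n) (k : ℕ) (hk : k ≤ n) :
    0 < (-1:ℝ)^(n-k) * (Qa n).eval (ea n k) := by
  rcases Nat.eq_zero_or_pos k with h0 | h1
  · subst h0; simpa using sign0 n hn
  · rcases eq_or_lt_of_le hk with he | hlt
    · rw [he]; exact signn n hn
    · exact signmid n k hn h1 (by omega)

lemma estep (n : ℕ) (hn : 4 ≤ n) (k : ℕ) (hk : k < n) : ea n k < ea n (k+1) := by
  have hN : (4:ℝ) ≤ (n:ℝ) := by exact_mod_cast hn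
  have hn1 : (0:ℝ) < (n:ℝ)-1 := by linarith
  have hpi := Real.pi_pos
  rcases Nat.eq_zero_or_pos k with h0 | h1
  · subst h0
    have h1e : ea n 1 = Real.cos ((2*((n:ℝ)-1-1)+1)*Real.pi/(2*((n:ℝ)-1))) := by
      rw [ea, if_neg (by omega), if_neg (by omega)]
      norm_num
    have h0e : ea n 0 = -(1+1/(n:ℝ)) := by rw [ea]; simp
    rw [h0e, h1e]
    have := Real.neg_one_le_cos ((2*((n:ℝ)-1-1)+1)*Real.pi/(2*((n:ℝ)-1)))
    have hpos : 0 < 1/(n:ℝ) := by positivity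
    linarith
  · rcases eq_or_lt_of_le (show k + 1 ≤ n by omega) with he | hlt
    · have hke : ea n k = Real.cos ((2*((n:ℝ)-1-(k:ℝ))+1)*Real.pi/(2*((n:ℝ)-1))) := by
        rw [ea, if_neg (by omega), if_neg (by omega)]
      have hne : ea n (k+1) = 1+1/(n:ℝ) := by rw [ea, if_neg (by omega), if_pos he]
      rw [hke, hne]
      have := Real.cos_le_one ((2*((n:ℝ)-1-(k:ℝ))+1)*Real.pi/(2*((n:ℝ)-1)))
      have hpos : 0 < 1/(n:ℝ) := by positivity
      linarith
    · have hke : ea n k = Real.cos ((2*((n:ℝ)-1-(k:ℝ))+1)*Real.pi/(2*((n:ℝ)-1))) := by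
        rw [ea, if_neg (by omega), if_neg (by omega)]
      have hk1e : ea n (k+1) = Real.cos ((2*((n:ℝ)-1-((k:ℝ)+1))+1)*Real.pi/(2*((n:ℝ)-1))) := by
        rw [ea, if_neg (by omega), if_neg (by omega)]
        push_cast
        ring_nf
      rw [hke, hk1e]
      have hkn : (k:ℝ) ≤ (n:ℝ) - 2 := by
        have : (k+2:ℕ) ≤ n := by omega
        have := congrArg (Nat.cast : ℕ → ℝ) (Nat.sub_add_cancel this) -- junk; redo below
        have h2 : ((k+2:ℕ):ℝ) ≤ (n:ℝ) := by exact_mod_cast (show (k+2:ℕ) ≤ n by omega)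
        push_cast at h2
        linarith
      have hk1r : (1:ℝ) ≤ (k:ℝ) := by exact_mod_cast h1
      apply Real.cos_lt_cos_of_nonneg_of_le_pi
      · apply div_nonneg (by nlinarith) (by positivity)
      · rw [div_le_iff₀ (by positivity)]
        nlinarith
      · rw [div_lt_div_iff₀ (by positivity) (by positivity)]
        nlinarith


lemma root_of_sign (p : ℝ[X]) {a b : ℝ} (hab : a < b) (h : p.eval a * p.eval b < 0) :
    ∃ c ∈ Set.Ioo a b, p.eval c = 0 := by
  have hc : ContinuousOn (fun t => p.eval t) (Set.Icc a b) :=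
    (Polynomial.continuous p).continuousOn
  by_cases ha : p.eval a < 0
  · have hb : 0 < p.eval b := by nlinarith
    obtain ⟨c, hc1, hc2⟩ := intermediate_value_Ioo hab.le hc ⟨ha, hb⟩
    exact ⟨c, hc1, hc2⟩
  · push_neg at ha
    have ha' : 0 < p.eval a := by
      rcases lt_or_eq_of_le ha with h' | h'
      · exact h'
      · exfalso; rw [← h'] at h; simp at h
    have hb : p.eval b < 0 := by nlinarith
    obtain ⟨c, hc1, hc2⟩ := intermediate_value_Ioo' hab.le hc ⟨hb, ha'⟩
    exact ⟨c, hc1, hc2⟩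

lemma emono (n : ℕ) (hn : 4 ≤ n) : ∀ i j, i ≤ j → j ≤ n → ea n i ≤ ea n j := by
  have key : ∀ d i, i + d ≤ n → ea n i ≤ ea n (i + d) := by
    intro d
    induction d with
    | zero => intro i _; exact le_rfl
    | succ dd ih =>
      intro i hi
      refine le_trans (ih i (by omega)) ?_
      have := estep n hn (i+dd) (by omega)
      exact this.le
  intro i j hij hj
  have := key (j - i) i (by omega)
  rwa [show i + (j-i) = j by omega] at this

lemma exroots (n : ℕ) (hn : 4 ≤ n) (k : ℕ) (hk : k < n) :
    ∃ c ∈ Set.Ioo (ea n k) (ea n (k+1)), (Qa n).eval c = 0 := by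
  apply root_of_sign _ (estep n hn k hk)
  have s1 := signs n hn k (by omega)
  have s2 := signs n hn (k+1) (by omega)
  have hexp : n - k = (n - (k+1)) + 1 := by omega
  rw [hexp, pow_succ] at s1
  set c : ℝ := (-1:ℝ)^(n-(k+1)) with hcdef
  have hc2 : c * c = 1 := by
    rw [hcdef, ← pow_add]
    exact Even.neg_one_pow ⟨n-(k+1), rfl⟩
  nlinarith [s1, s2, hc2]


end Stmt17Aux


open Stmt17Aux in
theorem stmt17 (n : ℕ) (hn : 4 ≤ n) (x : ℂ)
    (hx : (Polynomial.Chebyshev.T ℂ n).eval x / n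
        - (Polynomial.Chebyshev.T ℂ ((n : ℤ) - 2)).eval x / ((n : ℂ) - 2) = 0) :
    x.im = 0 ∧ -1 - 1 / (n : ℝ) ≤ x.re ∧ x.re ≤ 1 + 1 / (n : ℝ) := by
  have hN : (4:ℝ) ≤ (n:ℝ) := by exact_mod_cast hn
  obtain ⟨hdeg, hQ0⟩ := Qdeg n hn
  -- roots
  have hex : ∀ k : Fin n, ∃ c, c ∈ Set.Ioo (ea n k) (ea n (k+1)) ∧ (Qa n).eval c = 0 := by
    intro k
    obtain ⟨c, h1, h2⟩ := exroots n hn k k.2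
    exact ⟨c, h1, h2⟩
  choose r hr1 hr2 using hex
  -- complex polynomial
  set Qc : ℂ[X] := (Qa n).map (algebraMap ℝ ℂ) with hQc
  have hinj : Function.Injective (algebraMap ℝ ℂ) := (algebraMap ℝ ℂ).injective
  have hQc0 : Qc ≠ 0 := by
    rw [hQc]
    exact (Polynomial.map_ne_zero_iff hinj).mpr hQ0
  have hQcdeg : Qc.natDegree = n := by
    rw [hQc, Polynomial.natDegree_map_eq_of_injective hinj, hdeg]
  -- each r k gives a complex root
  have hroot : ∀ k : Fin n, Qc.eval ((r k : ℝ) : ℂ) = 0 := by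
    intro k
    rw [hQc]
    have : (algebraMap ℝ ℂ) (r k) = ((r k : ℝ) : ℂ) := rfl
    rw [← this, Polynomial.eval_map, Polynomial.eval₂_at_apply, hr2 k]
    simp
  -- x is a root
  have hn0 : (n:ℂ) ≠ 0 := Nat.cast_ne_zero.mpr (by omega)
  have hn2 : (n:ℂ) - 2 ≠ 0 := by
    have : (n:ℂ) ≠ 2 := by exact_mod_cast (show (n:ℕ) ≠ 2 by omega)
    exact sub_ne_zero.mpr this
  have hxroot : Qc.eval x = 0 := by
    rw [hQc, Qa]
    simp only [Polynomial.map_sub, Polynomial.map_mul, Polynomial.map_C, map_T]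
    rw [Polynomial.eval_sub, Polynomial.eval_mul, Polynomial.eval_mul,
      Polynomial.eval_C, Polynomial.eval_C]
    have hmap1 : (algebraMap ℝ ℂ) ((n:ℝ)-2) = (n:ℂ) - 2 := by push_cast; ring
    have hmap2 : (algebraMap ℝ ℂ) ((n:ℝ)) = (n:ℂ) := by push_cast; ring
    rw [hmap1, hmap2]
    field_simp at hx
    linear_combination hx
  -- the finset of roots
  have hrlt : ∀ j k : Fin n, j < k → r j < r k := by
    intro j k hjk
    have h1 : r j < ea n (j+1) := (hr1 j).2
    have h2 : ea n (j+1) ≤ ea n k := emono n hn (j+1) k (by exact_mod_cast hjk) (by omega)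
    have h3 : ea n (k:ℕ) < r k := (hr1 k).1
    linarith
  have hinj2 : Function.Injective (fun k : Fin n => ((r k : ℝ) : ℂ)) := by
    intro a b hab
    simp only [Complex.ofReal_inj] at hab
    by_contra hne
    rcases lt_trichotomy a b with h | h | h
    · exact absurd hab (ne_of_lt (hrlt a b h))
    · exact hne h
    · exact absurd hab.symm (ne_of_lt (hrlt b a h))
  set S : Finset ℂ := Finset.image (fun k : Fin n => ((r k : ℝ) : ℂ)) Finset.univ with hS
  have hScard : S.card = n := by
    rw [hS, Finset.card_image_of_injective _ hinj2, Finset.card_univ, Fintype.card_fin]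
  have hSsub : S ⊆ Qc.roots.toFinset := by
    intro z hz
    rw [hS, Finset.mem_image] at hz
    obtain ⟨k, _, hk⟩ := hz
    rw [Multiset.mem_toFinset, Polynomial.mem_roots']
    exact ⟨hQc0, by rw [Polynomial.IsRoot, ← hk]; exact hroot k⟩
  have hcards : Qc.roots.toFinset.card ≤ n := by
    calc Qc.roots.toFinset.card ≤ Multiset.card Qc.roots := Multiset.toFinset_card_le _
    _ ≤ Qc.natDegree := Polynomial.card_roots' Qc
    _ = n := hQcdeg
  have hxS : x ∈ S := by
    by_contra hxS
    have hsub : insert x S ⊆ Qc.roots.toFinset := by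
      intro z hz
      rcases Finset.mem_insert.mp hz with h | h
      · subst h
        rw [Multiset.mem_toFinset, Polynomial.mem_roots']
        exact ⟨hQc0, hxroot⟩
      · exact hSsub h
    have := Finset.card_le_card hsub
    rw [Finset.card_insert_of_notMem hxS, hScard] at this
    omega
  rw [hS, Finset.mem_image] at hxS
  obtain ⟨k, _, hk⟩ := hxS
  have hbound1 : ea n 0 ≤ r k := by
    have := emono n hn 0 k (by omega) (by omega)
    linarith [(hr1 k).1]
  have hbound2 : r k ≤ ea n n := by
    have := emono n hn (k+1) n (by omega) (by omega)
    linarith [(hr1 k).2]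
  have he0 : ea n 0 = -(1+1/(n:ℝ)) := by rw [ea]; simp
  have hen : ea n n = 1+1/(n:ℝ) := by rw [ea]; simp [show n ≠ 0 by omega]
  rw [he0] at hbound1
  rw [hen] at hbound2
  rw [one_div] at hbound1 hbound2
  refine ⟨?_, ?_, ?_⟩
  · rw [← hk]; simp
  · rw [← hk]; simp; linarith
  · rw [← hk]; simp; linarith
end
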